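/- arXiv:2003.02165 — 3 statements merged into one kernel-verified Lean document; each statement's English description precedes it below -/
import Mathlib

section
/- Let d ≥ 2 and f : [0,4] → (-∞,∞] be non-increasing, finite and convex on (0,4]. Let ω = {v_0,...,v_d} ⊂ S^{d-1} be affinely independent with the origin in the interior of the simplex T = conv(ω). Then min_{x ∈ S^{d-1}} ∑_{i=0}^d f(|x - v_i|²) ≤ f(4) + d·f(2 - 2/d). If moreover f is strictly convex on (0,4] and ω is not the vertex set of a regular d-simplex inscribed in S^{d-1}, then the inequality is strict. -/
open Finset RealInnerProductSpace

open Set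

private lemma gy_lt_gz (g : ℝ → ℝ) (hsc : StrictConvexOn ℝ (Set.Ioc (0:ℝ) 4) g)
    (hanti : AntitoneOn g (Set.Ioc (0:ℝ) 4)) {z y : ℝ}
    (hz : z ∈ Set.Ioc (0:ℝ) 4) (hy : y ∈ Set.Ioc (0:ℝ) 4) (h : z < y) : g y < g z := by
  rcases lt_or_eq_of_le (hanti hz hy h.le) with h' | h'
  · exact h'
  · exfalso
    have hm : (z + y) / 2 ∈ Set.Ioc (0:ℝ) 4 := ⟨by nlinarith [hz.1, hy.1], by nlinarith [hz.2, hy.2]⟩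
    have h1 : g ((1/2 : ℝ) • z + (1/2 : ℝ) • y) < (1/2 : ℝ) • g z + (1/2 : ℝ) • g y :=
      hsc.2 hz hy (ne_of_lt h) (by norm_num) (by norm_num) (by norm_num)
    have h2 : (1/2 : ℝ) • z + (1/2 : ℝ) • y = (z + y) / 2 := by
      simp only [smul_eq_mul]; ring
    have h3 : g ((z + y) / 2) ≥ g y := hanti hm hy (by linarith)
    rw [h2] at h1
    simp only [smul_eq_mul] at h1 h3
    nlinarith

private lemma claim_le (g : ℝ → ℝ) (hconv : ConvexOn ℝ (Set.Ioc (0:ℝ) 4) g)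
    (hanti : AntitoneOn g (Set.Ioc (0:ℝ) 4)) (c : ℝ) (hc : 1 ≤ c) {x y z : ℝ}
    (hx : x ∈ Set.Ioc (0:ℝ) 4) (hy : y ∈ Set.Ioc (0:ℝ) 4) (hz : z ∈ Set.Ioc (0:ℝ) 4)
    (hzx : z ≤ x) (hkey : z + (4 - x)/c ≤ y) :
    g x + c * g y ≤ g 4 + c * g z := by
  have h4 : (4:ℝ) ∈ Set.Ioc (0:ℝ) 4 := ⟨by norm_num, le_refl 4⟩
  have hc0 : (0:ℝ) < c := lt_of_lt_of_le one_pos hc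
  have hzy : z ≤ y := by
    have : 0 ≤ (4 - x)/c := div_nonneg (by linarith [hx.2]) hc0.le
    linarith
  rcases eq_or_lt_of_le hx.2 with hx4 | hx4
  · rw [hx4]
    have := hanti hz hy hzy
    nlinarith
  · have hzy' : z < y := by
      have : 0 < (4-x)/c := div_pos (by linarith) hc0
      linarith
    have hs24 : (g y - g z)/(y - z) ≤ (g 4 - g z)/(4 - z) :=
      hconv.secant_mono hz hy h4 (ne_of_gt hzy') (by intro h; rw [← h] at hzy'; linarith [hy.2]) hy.2
    have hs41 : (g z - g 4)/(z - 4) ≤ (g x - g 4)/(x - 4) :=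
      hconv.secant_mono h4 hz hx (by intro h; rw [h] at hzy'; linarith [hy.2]) (ne_of_lt hx4) hzx
    have he1 : (g 4 - g z)/(4 - z) = (g z - g 4)/(z - 4) := by
      rw [← neg_div_neg_eq]; ring_nf
    have he2 : (g x - g 4)/(x - 4) = (g 4 - g x)/(4 - x) := by
      rw [← neg_div_neg_eq]; ring_nf
    set s1 := (g 4 - g x)/(4 - x) with hs1
    set s2 := (g y - g z)/(y - z) with hs2
    have hs21 : s2 ≤ s1 := by
      calc s2 ≤ (g 4 - g z)/(4 - z) := hs24
        _ = (g z - g 4)/(z - 4) := he1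
        _ ≤ (g x - g 4)/(x - 4) := hs41
        _ = s1 := he2
    have hs2neg : s2 ≤ 0 :=
      div_nonpos_of_nonpos_of_nonneg (by linarith [hanti hz hy hzy'.le]) (by linarith)
    have h4x : (4:ℝ) - x ≠ 0 := by linarith
    have hyz0 : y - z ≠ 0 := by linarith
    have e1 : g x - g 4 = (4 - x) * (-s1) := by
      rw [hs1]; field_simp; ring
    have e2 : g z - g y = (y - z) * (-s2) := by
      rw [hs2]; field_simp; ring
    have h1 : 4 - x ≤ c * (y - z) := by
      have := (div_le_iff₀ hc0).mp (by linarith : (4 - x)/c ≤ y - z)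
      linarith
    have : g x - g 4 ≤ c * (g z - g y) := by
      calc g x - g 4 = (4 - x) * (-s1) := e1
        _ ≤ (4 - x) * (-s2) := by
            apply mul_le_mul_of_nonneg_left (by linarith) (by linarith [hx.2])
        _ ≤ (c * (y - z)) * (-s2) := by
            apply mul_le_mul_of_nonneg_right h1 (by linarith)
        _ = c * (g z - g y) := by rw [e2]; ring
    linarith

private lemma claim_lt (g : ℝ → ℝ) (hconv : ConvexOn ℝ (Set.Ioc (0:ℝ) 4) g)
    (hsc : StrictConvexOn ℝ (Set.Ioc (0:ℝ) 4) g)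
    (hanti : AntitoneOn g (Set.Ioc (0:ℝ) 4)) (c : ℝ) (hc : 1 ≤ c) {x y z : ℝ}
    (hx : x ∈ Set.Ioc (0:ℝ) 4) (hy : y ∈ Set.Ioc (0:ℝ) 4) (hz : z ∈ Set.Ioc (0:ℝ) 4)
    (hzx : z ≤ x) (hkey : z + (4 - x)/c ≤ y) (hy4 : y < 4) (hne : x < 4 ∨ z < y) :
    g x + c * g y < g 4 + c * g z := by
  have h4 : (4:ℝ) ∈ Set.Ioc (0:ℝ) 4 := ⟨by norm_num, le_refl 4⟩
  have hc0 : (0:ℝ) < c := lt_of_lt_of_le one_pos hc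
  rcases lt_or_eq_of_le hx.2 with hx4 | hx4
  · -- x < 4
    have hzy' : z < y := by
      have : 0 < (4-x)/c := div_pos (by linarith) hc0
      linarith
    have hs24 : (g y - g z)/(y - z) < (g 4 - g z)/(4 - z) :=
      hsc.secant_strict_mono hz hy h4 (ne_of_gt hzy') (by intro h; rw [← h] at hzy'; linarith) hy4
    have hs41 : (g z - g 4)/(z - 4) ≤ (g x - g 4)/(x - 4) :=
      hconv.secant_mono h4 hz hx (by intro h; rw [h] at hzy'; linarith) (ne_of_lt hx4) hzx
    have he1 : (g 4 - g z)/(4 - z) = (g z - g 4)/(z - 4) := by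
      rw [← neg_div_neg_eq]; ring_nf
    have he2 : (g x - g 4)/(x - 4) = (g 4 - g x)/(4 - x) := by
      rw [← neg_div_neg_eq]; ring_nf
    set s1 := (g 4 - g x)/(4 - x) with hs1
    set s2 := (g y - g z)/(y - z) with hs2
    have hs21 : s2 < s1 := by
      calc s2 < (g 4 - g z)/(4 - z) := hs24
        _ = (g z - g 4)/(z - 4) := he1
        _ ≤ (g x - g 4)/(x - 4) := hs41
        _ = s1 := he2
    have hs2neg : s2 ≤ 0 :=
      div_nonpos_of_nonpos_of_nonneg (by linarith [hanti hz hy hzy'.le]) (by linarith)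
    have h4x : (4:ℝ) - x ≠ 0 := by linarith
    have hyz0 : y - z ≠ 0 := by linarith
    have e1 : g x - g 4 = (4 - x) * (-s1) := by
      rw [hs1]; field_simp; ring
    have e2 : g z - g y = (y - z) * (-s2) := by
      rw [hs2]; field_simp; ring
    have h1 : 4 - x ≤ c * (y - z) := by
      have := (div_le_iff₀ hc0).mp (by linarith : (4 - x)/c ≤ y - z)
      linarith
    have : g x - g 4 < c * (g z - g y) := by
      calc g x - g 4 = (4 - x) * (-s1) := e1
        _ < (4 - x) * (-s2) := by
            apply mul_lt_mul_of_pos_left (by linarith) (by linarith)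
        _ ≤ (c * (y - z)) * (-s2) := by
            apply mul_le_mul_of_nonneg_right h1 (by linarith)
        _ = c * (g z - g y) := by rw [e2]; ring
    linarith
  · -- x = 4
    have hzy' : z < y := by
      rcases hne with h | h
      · rw [hx4] at h; linarith
      · exact h
    have := gy_lt_gz g hsc hanti hz hy hzy'
    rw [hx4]
    nlinarith

open Finset

private lemma exists_pos_bary (d : ℕ) (v : Fin (d+1) → EuclideanSpace ℝ (Fin d))
    (hvnorm : ∀ i, ‖v i‖ = 1)
    (hai : AffineIndependent ℝ v)
    (hint : (0 : EuclideanSpace ℝ (Fin d)) ∈ interior (convexHull ℝ (Set.range v))) :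
    ∃ lam : Fin (d+1) → ℝ, (∀ j, 0 < lam j) ∧ ∑ j, lam j = 1 ∧ ∑ j, lam j • v j = 0 := by
  classical
  have hrep : ∀ p ∈ convexHull ℝ (Set.range v), ∃ μ : Fin (d+1) → ℝ,
      (∀ j, 0 ≤ μ j) ∧ ∑ j, μ j = 1 ∧ ∑ j, μ j • v j = p := by
    intro p hp
    rw [convexHull_range_eq_exists_affineCombination] at hp
    obtain ⟨s, wt, hw0, hw1, hwp⟩ := hp
    refine ⟨fun j => if j ∈ s then wt j else 0, fun j => ?_, ?_, ?_⟩
    · dsimp only; split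
      · exact hw0 _ ‹_›
      · exact le_refl _
    · rw [Finset.sum_ite_mem, Finset.univ_inter, hw1]
    · have : ∀ j : Fin (d+1), (if j ∈ s then wt j else 0) • v j
          = if j ∈ s then wt j • v j else 0 := by
        intro j; split <;> simp
      rw [Finset.sum_congr rfl (fun j _ => this j), Finset.sum_ite_mem, Finset.univ_inter]
      rw [← hwp, Finset.affineCombination_eq_linear_combination s v wt hw1]
  obtain ⟨lam, hl0, hl1, hl2⟩ := hrep 0 (interior_subset hint)
  obtain ⟨ε, hε, hball⟩ := Metric.mem_nhds_iff.mp (mem_interior_iff_mem_nhds.mp hint)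
  refine ⟨lam, fun i => ?_, hl1, hl2⟩
  have hmem : -(ε/2) • v i ∈ convexHull ℝ (Set.range v) := by
    apply hball
    rw [Metric.mem_ball, dist_zero_right, norm_smul, hvnorm i]
    simp only [mul_one, norm_neg]
    rw [Real.norm_eq_abs, abs_of_pos (by linarith)]
    linarith
  obtain ⟨μ, hμ0, hμ1, hμ2⟩ := hrep _ hmem
  set c : Fin (d+1) → ℝ := fun j => (μ j + if j = i then ε/2 else 0) / (1 + ε/2) with hc
  have hden : (0:ℝ) < 1 + ε/2 := by linarith
  have hc1 : ∑ j, c j = 1 := by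
    rw [hc]
    simp only
    rw [← Finset.sum_div, Finset.sum_add_distrib, hμ1, Finset.sum_ite_eq' Finset.univ i]
    simp [Finset.mem_univ]
    field_simp
    intro h; linarith
  have hc2 : ∑ j, c j • v j = 0 := by
    have expand : ∀ j : Fin (d+1), c j • v j
        = (1 + ε/2)⁻¹ • (μ j • v j + (if j = i then ε/2 else 0) • v j) := by
      intro j
      rw [hc]
      simp only
      rw [div_eq_inv_mul, mul_smul, ← add_smul]
    rw [Finset.sum_congr rfl (fun j _ => expand j), ← Finset.smul_sum]
    rw [Finset.sum_add_distrib, hμ2]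
    have : ∑ j, (if j = i then ε/2 else 0) • v j = (ε/2) • v i := by
      rw [Finset.sum_eq_single i]
      · simp
      · intro b _ hb; simp [hb]
      · intro h; exact absurd (Finset.mem_univ i) h
    rw [this]
    simp
  have huniq := hai.eq_zero_of_sum_eq_zero (w := fun j => lam j - c j)
    (by rw [Finset.sum_sub_distrib, hl1, hc1, sub_self])
    (by
      have : ∀ j : Fin (d+1), (lam j - c j) • v j = lam j • v j - c j • v j := by
        intro j; rw [sub_smul]
      rw [Finset.sum_congr rfl (fun j _ => this j), Finset.sum_sub_distrib, hl2, hc2, sub_self])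
  have hlc : lam i = c i := by
    have h := huniq i (Finset.mem_univ i)
    linarith
  rw [hlc, hc]
  simp only [if_pos rfl, eq_self_iff_true, if_true]
  exact div_pos (by linarith [hμ0 i]) hden

private lemma coe_finset_sum_ereal {α : Type*} (s : Finset α) (h : α → ℝ) :
    ((∑ x ∈ s, h x : ℝ) : EReal) = ∑ x ∈ s, ((h x : ℝ) : EReal) := by
  classical
  induction s using Finset.induction_on with
  | empty => simp
  | insert a s hx ih => rw [Finset.sum_insert hx, Finset.sum_insert hx, EReal.coe_add, ih]

set_option maxHeartbeats 1600000 in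
private lemma key_lemma (d : ℕ) (hd : 2 ≤ d) (f : ℝ → EReal)
    (hne_bot : ∀ t ∈ Set.Icc (0:ℝ) 4, f t ≠ ⊥)
    (hfin : ∀ t ∈ Set.Ioc (0:ℝ) 4, f t ≠ ⊤)
    (hanti : AntitoneOn f (Set.Ioc (0:ℝ) 4))
    (hconv : ConvexOn ℝ (Set.Ioc (0:ℝ) 4) (fun t => (f t).toReal))
    (v : Fin (d+1) → EuclideanSpace ℝ (Fin d))
    (hvnorm : ∀ i, ‖v i‖ = 1)
    (hai : AffineIndependent ℝ v)
    (lam : Fin (d+1) → ℝ) (hpos : ∀ j, 0 < lam j)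
    (hsum : ∑ j, lam j = 1) (hzero : ∑ j, lam j • v j = 0)
    (i : Fin (d+1)) (hi : ((d:ℝ) + 1) * lam i ≤ 1) :
    (⨅ y : Metric.sphere (0 : EuclideanSpace ℝ (Fin d)) 1,
        ∑ k, f (‖(y : EuclideanSpace ℝ (Fin d)) - v k‖^2)) ≤
      f 4 + ((d:ℝ) : EReal) * f (2 - 2/(d:ℝ)) ∧
    (StrictConvexOn ℝ (Set.Ioc (0:ℝ) 4) (fun t => (f t).toReal) →
      (∃ k, k ≠ i ∧ (inner ℝ (v i) (v k) : ℝ) ≠ -1/(d:ℝ)) →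
      (⨅ y : Metric.sphere (0 : EuclideanSpace ℝ (Fin d)) 1,
          ∑ k, f (‖(y : EuclideanSpace ℝ (Fin d)) - v k‖^2)) <
        f 4 + ((d:ℝ) : EReal) * f (2 - 2/(d:ℝ))) := by
  classical
  have hd2 : (2:ℝ) ≤ (d:ℝ) := by exact_mod_cast hd
  have hd0 : (0:ℝ) < (d:ℝ) := by linarith
  -- span of all v is everything
  have hspan : Submodule.span ℝ (Set.range v) = ⊤ := by
    have hcard : Fintype.card (Fin (d+1)) = Module.finrank ℝ (EuclideanSpace ℝ (Fin d)) + 1 := by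
      simp [finrank_euclideanSpace_fin]
    have h1 : affineSpan ℝ (Set.range v) = ⊤ :=
      hai.affineSpan_eq_top_iff_card_eq_finrank_add_one.mpr hcard
    have h3 : vectorSpan ℝ (Set.range v) = ⊤ := by
      rw [← direction_affineSpan, h1, AffineSubspace.direction_top]
    have h2 : vectorSpan ℝ (Set.range v) ≤ Submodule.span ℝ (Set.range v) := by
      rw [vectorSpan_def, Submodule.span_le]
      intro x hx
      rw [Set.mem_vsub] at hx
      obtain ⟨p, hp, q, hq, h⟩ := hx
      rw [← h, vsub_eq_sub]
      exact sub_mem (Submodule.subset_span hp) (Submodule.subset_span hq)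
    exact top_unique (h3 ▸ h2)
  have hperp : ∀ x : EuclideanSpace ℝ (Fin d), (∀ j, j ≠ i → ⟪v j, x⟫ = 0) → x = 0 := by
    intro x hx
    have hvi : ⟪v i, x⟫ = 0 := by
      have h0 : ⟪(0 : EuclideanSpace ℝ (Fin d)), x⟫ = 0 := inner_zero_left x
      rw [← hzero, sum_inner] at h0
      have h1 : ∑ j, lam j * ⟪v j, x⟫ = 0 := by
        simpa only [real_inner_smul_left] using h0
      rw [← Finset.add_sum_erase _ _ (Finset.mem_univ i)] at h1
      have h2 : ∑ j ∈ Finset.univ.erase i, lam j * ⟪v j, x⟫ = 0 :=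
        Finset.sum_eq_zero fun j hj => by rw [hx j (Finset.ne_of_mem_erase hj), mul_zero]
      rw [h2, add_zero] at h1
      exact (mul_eq_zero.mp h1).resolve_left (ne_of_gt (hpos i))
    have hall : ∀ y, y ∈ Submodule.span ℝ (Set.range v) → ⟪y, x⟫ = 0 := by
      intro y hy
      induction hy using Submodule.span_induction with
      | mem y hy =>
        obtain ⟨j, rfl⟩ := hy
        by_cases hj : j = i
        · rw [hj]; exact hvi
        · exact hx j hj
      | zero => exact inner_zero_left x
      | add y z _ _ hy hz => rw [inner_add_left, hy, hz, add_zero]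
      | smul c y _ hy => rw [real_inner_smul_left, hy, mul_zero]
    exact inner_self_eq_zero.mp (hall x (hspan ▸ Submodule.mem_top))
  haveI hnontriv : Nontrivial (Fin (d+1)) := by
    have : 2 ≤ d + 1 := by omega
    exact Fin.nontrivial_iff_two_le.mpr this
  haveI hne_sub : Nonempty {j : Fin (d+1) // j ≠ i} := by
    obtain ⟨j, hj⟩ := exists_ne i
    exact ⟨⟨j, hj⟩⟩
  let L : EuclideanSpace ℝ (Fin d) →ₗ[ℝ] ({j : Fin (d+1) // j ≠ i} → ℝ) :=
    { toFun := fun x j => ⟪v j.1, x⟫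
      map_add' := fun x y => by funext j; exact inner_add_right _ _ _
      map_smul' := fun c x => by funext j; exact real_inner_smul_right _ _ _ }
  have hLinj : Function.Injective L := by
    rw [← LinearMap.ker_eq_bot, Submodule.eq_bot_iff]
    intro x hx
    refine hperp x fun j hj => ?_
    exact congrFun (LinearMap.mem_ker.mp hx) ⟨j, hj⟩
  have hcard_sub : Fintype.card {j : Fin (d+1) // j ≠ i} = d := by
    have h1 := Fintype.card_subtype_compl (fun j : Fin (d+1) => j = i)
    rw [Fintype.card_subtype_eq, Fintype.card_fin] at h1
    simpa using h1
  have hLsurj : Function.Surjective L := by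
    refine (LinearMap.injective_iff_surjective_of_finrank_eq_finrank ?_).mp hLinj
    rw [finrank_euclideanSpace_fin, Module.finrank_fintype_fun_eq_card, hcard_sub]
  obtain ⟨u, hu⟩ := hLsurj (fun _ => 1)
  have hu0 : u ≠ 0 := by
    intro h
    have h2 := congrFun hu (Classical.arbitrary _)
    rw [h, map_zero] at h2
    simpa using h2
  have hnu : (0:ℝ) < ‖u‖ := norm_pos_iff.mpr hu0
  obtain ⟨w, t, hwnorm, htpos, hwj⟩ : ∃ (w : EuclideanSpace ℝ (Fin d)) (t : ℝ),
      ‖w‖ = 1 ∧ 0 < t ∧ ∀ j, j ≠ i → ⟪w, v j⟫ = t := by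
    refine ⟨‖u‖⁻¹ • u, ‖u‖⁻¹, ?_, inv_pos.mpr hnu, ?_⟩
    · rw [norm_smul, norm_inv, norm_norm, inv_mul_cancel₀ hnu.ne']
    · intro j hj
      rw [real_inner_comm, real_inner_smul_right]
      have h3 : ⟪v j, u⟫ = 1 := congrFun hu ⟨j, hj⟩
      rw [h3, mul_one]
  obtain ⟨a, hadef⟩ : ∃ a : ℝ, ⟪w, v i⟫ = a := ⟨_, rfl⟩
  have hident : lam i * a + (1 - lam i) * t = 0 := by
    have h0 : ⟪w, (0 : EuclideanSpace ℝ (Fin d))⟫ = 0 := inner_zero_right w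
    rw [← hzero, inner_sum] at h0
    have h1 : ∑ j, lam j * ⟪w, v j⟫ = 0 := by
      simpa only [real_inner_smul_right] using h0
    rw [← Finset.add_sum_erase _ _ (Finset.mem_univ i)] at h1
    have h2 : ∑ j ∈ Finset.univ.erase i, lam j * ⟪w, v j⟫
        = ∑ j ∈ Finset.univ.erase i, lam j * t :=
      Finset.sum_congr rfl fun j hj => by rw [hwj j (Finset.ne_of_mem_erase hj)]
    have h3 : lam i + ∑ j ∈ Finset.univ.erase i, lam j = 1 := by
      rw [Finset.add_sum_erase _ _ (Finset.mem_univ i), hsum]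
    rw [h2, ← Finset.sum_mul] at h1
    have h4 : ∑ j ∈ Finset.univ.erase i, lam j = 1 - lam i := by linarith
    rw [h4, hadef] at h1
    linarith
  have ha1 : -1 ≤ a := by
    have h := abs_real_inner_le_norm w (v i)
    rw [hwnorm, hvnorm i, one_mul] at h
    have h2 := abs_le.mp h
    rw [← hadef]
    exact h2.1
  have hlam1 : lam i < 1 := by nlinarith [hpos i]
  have haneg : a < 0 := by
    nlinarith [htpos, hpos i, hident, hlam1, mul_pos (sub_pos.mpr hlam1) htpos]
  have hdta : (d:ℝ) * t + a ≤ 0 := by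
    nlinarith [hident, hpos i,
      mul_nonneg htpos.le (by linarith : (0:ℝ) ≤ 1 - ((d:ℝ)+1) * lam i)]
  have htd : t ≤ 1/(d:ℝ) := by
    rw [le_div_iff₀ hd0]
    nlinarith [hdta, ha1]
  have hinv2 : 1/(d:ℝ) ≤ 1/2 := by
    rw [div_le_div_iff₀ hd0 two_pos]; linarith
  set X : ℝ := 2 - 2*a with hX
  set Y : ℝ := 2 - 2*t with hY
  set Z : ℝ := 2 - 2/(d:ℝ) with hZ
  have hXm : X ∈ Set.Ioc (0:ℝ) 4 := by
    rw [hX, Set.mem_Ioc]; constructor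
    · linarith
    · linarith
  have hYm : Y ∈ Set.Ioc (0:ℝ) 4 := by
    rw [hY, Set.mem_Ioc]; constructor
    · linarith
    · linarith
  have h2d1 : 2/(d:ℝ) ≤ 1 := by
    rw [div_le_one hd0]; linarith
  have h2d0 : 0 < 2/(d:ℝ) := by positivity
  have hZm : Z ∈ Set.Ioc (0:ℝ) 4 := by
    rw [hZ, Set.mem_Ioc]; constructor
    · linarith
    · linarith
  have hZX : Z ≤ X := by
    rw [hX, hZ]
    linarith
  have hkey : Z + (4 - X)/(d:ℝ) ≤ Y := by
    have h1 : (4 - X)/(d:ℝ) ≤ Y - Z := by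
      rw [div_le_iff₀ hd0, hX, hY, hZ]
      have h2 : (2 - 2*t - (2 - 2/(d:ℝ))) * (d:ℝ) = 2 - 2*(t*(d:ℝ)) := by
        have h9 : 2/(d:ℝ)*(d:ℝ) = 2 := div_mul_cancel₀ _ hd0.ne'
        linear_combination h9
      rw [h2]
      nlinarith [hdta]
    linarith
  set g : ℝ → ℝ := fun s => (f s).toReal with hg
  have hcoe : ∀ s ∈ Set.Ioc (0:ℝ) 4, f s = ((g s : ℝ) : EReal) := fun s hs =>
    (EReal.coe_toReal (hfin s hs) (hne_bot s ⟨hs.1.le, hs.2⟩)).symm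
  have hanti_g : AntitoneOn g (Set.Ioc (0:ℝ) 4) := by
    intro s hs r hr hsr
    have h5 := hanti hs hr hsr
    rw [hcoe s hs, hcoe r hr] at h5
    exact_mod_cast h5
  have hw_sphere : w ∈ Metric.sphere (0 : EuclideanSpace ℝ (Fin d)) 1 := by
    rw [mem_sphere_zero_iff_norm]
    exact hwnorm
  have hinf_le : (⨅ y : Metric.sphere (0 : EuclideanSpace ℝ (Fin d)) 1,
      ∑ k, f (‖(y : EuclideanSpace ℝ (Fin d)) - v k‖^2))
      ≤ ∑ k, f (‖w - v k‖^2) :=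
    iInf_le _ (⟨w, hw_sphere⟩ : Metric.sphere (0 : EuclideanSpace ℝ (Fin d)) 1)
  have hargi : ‖w - v i‖^2 = X := by
    rw [norm_sub_sq_real, hwnorm, hvnorm i, hadef, hX]; ring
  have hargj : ∀ j, j ≠ i → ‖w - v j‖^2 = Y := by
    intro j hj
    rw [norm_sub_sq_real, hwnorm, hvnorm j, hwj j hj, hY]; ring
  have hsum_eq : ∑ k, f (‖w - v k‖^2) = ((g X + (d:ℝ) * g Y : ℝ) : EReal) := by
    have hterm : ∀ k : Fin (d+1), f (‖w - v k‖^2)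
        = (((if k = i then g X else g Y) : ℝ) : EReal) := by
      intro k
      by_cases hk : k = i
      · rw [hk, hargi, if_pos rfl]; exact hcoe X hXm
      · rw [hargj k hk, if_neg hk]; exact hcoe Y hYm
    rw [Finset.sum_congr rfl fun k _ => hterm k, ← coe_finset_sum_ereal]
    congr 1
    rw [← Finset.add_sum_erase _ _ (Finset.mem_univ i), if_pos rfl]
    have h6 : ∑ k ∈ Finset.univ.erase i, (if k = i then g X else g Y) = (d:ℝ) * g Y := by
      rw [Finset.sum_congr rfl (fun k hk => if_neg (Finset.ne_of_mem_erase hk)),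
        Finset.sum_const, Finset.card_erase_of_mem (Finset.mem_univ i), Finset.card_univ,
        Fintype.card_fin]
      simp [nsmul_eq_mul]
    rw [h6]
  have hbound_eq : f 4 + ((d:ℝ) : EReal) * f (2 - 2/(d:ℝ))
      = ((g 4 + (d:ℝ) * g Z : ℝ) : EReal) := by
    have h4m : (4:ℝ) ∈ Set.Ioc (0:ℝ) 4 := ⟨by norm_num, le_refl 4⟩
    rw [hcoe 4 h4m, show (2 - 2/(d:ℝ)) = Z from hZ.symm, hcoe Z hZm,
      ← EReal.coe_mul, ← EReal.coe_add]
  have hd1 : (1:ℝ) ≤ (d:ℝ) := by linarith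
  constructor
  · refine hinf_le.trans ?_
    rw [hsum_eq, hbound_eq]
    exact_mod_cast claim_le g hconv hanti_g (d:ℝ) hd1 hXm hYm hZm hZX hkey
  · intro hsc hex
    by_cases hcase : a = -1 ∧ t = 1/(d:ℝ)
    · exfalso
      obtain ⟨k, hk, hkin⟩ := hex
      have hwvi : w = -v i := by
        have h0 : ‖w + v i‖^2 = 0 := by
          rw [norm_add_sq_real, hwnorm, hvnorm i, hadef, hcase.1]; ring
        have h1 : ‖w + v i‖ = 0 := by
          nlinarith [norm_nonneg (w + v i)]
        exact eq_neg_of_add_eq_zero_left (norm_eq_zero.mp h1)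
      apply hkin
      have hvik : v i = -w := by rw [hwvi, neg_neg]
      have h7 : ⟪v i, v k⟫ = -t := by
        rw [hvik, inner_neg_left, hwj k hk]
      rw [h7, hcase.2]
      ring
    · have hne2 : X < 4 ∨ Z < Y := by
        rcases not_and_or.mp hcase with h | h
        · left
          rw [hX]
          have : -1 < a := lt_of_le_of_ne ha1 (Ne.symm h)
          linarith
        · right
          rw [hY, hZ]
          have h11 : t < 1/(d:ℝ) := lt_of_le_of_ne htd h
          have h10 : 2/(d:ℝ) = 2*(1/(d:ℝ)) := by ring
          linarith
      have hY4 : Y < 4 := by rw [hY]; linarith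
      refine lt_of_le_of_lt hinf_le ?_
      rw [hsum_eq, hbound_eq]
      exact_mod_cast claim_lt g hconv hsc hanti_g (d:ℝ) hd1 hXm hYm hZm hZX hkey hY4 hne2

set_option maxHeartbeats 1600000 in
theorem stmt_15 (d : ℕ) (hd : 2 ≤ d) (f : ℝ → EReal)
    (hne_bot : ∀ t ∈ Set.Icc (0:ℝ) 4, f t ≠ ⊥)
    (hfin : ∀ t ∈ Set.Ioc (0:ℝ) 4, f t ≠ ⊤)
    (hanti : AntitoneOn f (Set.Ioc (0:ℝ) 4))
    (hconv : ConvexOn ℝ (Set.Ioc (0:ℝ) 4) (fun t => (f t).toReal))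
    (v : Fin (d+1) → EuclideanSpace ℝ (Fin d))
    (hvnorm : ∀ i, ‖v i‖ = 1)
    (hai : AffineIndependent ℝ v)
    (hint : (0 : EuclideanSpace ℝ (Fin d)) ∈ interior (convexHull ℝ (Set.range v))) :
    (⨅ y : Metric.sphere (0 : EuclideanSpace ℝ (Fin d)) 1,
        ∑ i, f (‖(y : EuclideanSpace ℝ (Fin d)) - v i‖^2)) ≤
      f 4 + ((d:ℝ) : EReal) * f (2 - 2/(d:ℝ)) ∧
    (StrictConvexOn ℝ (Set.Ioc (0:ℝ) 4) (fun t => (f t).toReal) →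
      ¬ (∀ i j, i ≠ j → (inner ℝ (v i) (v j) : ℝ) = -1/(d:ℝ)) →
      (⨅ y : Metric.sphere (0 : EuclideanSpace ℝ (Fin d)) 1,
          ∑ i, f (‖(y : EuclideanSpace ℝ (Fin d)) - v i‖^2)) <
        f 4 + ((d:ℝ) : EReal) * f (2 - 2/(d:ℝ))) := by
  classical
  obtain ⟨lam, hpos, hsum, hzero⟩ := exists_pos_bary d v hvnorm hai hint
  have hd2 : (2:ℝ) ≤ (d:ℝ) := by exact_mod_cast hd
  have hd0 : (0:ℝ) < (d:ℝ) := by linarith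
  obtain ⟨imin, -, hmin⟩ := Finset.exists_min_image Finset.univ lam ⟨0, Finset.mem_univ 0⟩
  have hcardsum : ((d:ℝ)+1) * lam imin ≤ 1 := by
    have h1 : ∑ _j : Fin (d+1), lam imin ≤ ∑ j, lam j :=
      Finset.sum_le_sum fun j _ => hmin j (Finset.mem_univ j)
    rw [Finset.sum_const, Finset.card_univ, Fintype.card_fin, hsum, nsmul_eq_mul] at h1
    exact_mod_cast h1
  have hk := key_lemma d hd f hne_bot hfin hanti hconv v hvnorm hai lam hpos hsum hzero
    imin hcardsum
  refine ⟨hk.1, ?_⟩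
  intro hsc hreg
  push_neg at hreg
  obtain ⟨i0, j0, hne, hinner⟩ := hreg
  by_cases hcase : ∃ k, k ≠ imin ∧ (inner ℝ (v imin) (v k) : ℝ) ≠ -1/(d:ℝ)
  · exact hk.2 hsc hcase
  · push_neg at hcase
    have hlmin : lam imin = 1/((d:ℝ)+1) := by
      have h0 : ⟪(0 : EuclideanSpace ℝ (Fin d)), v imin⟫ = 0 := inner_zero_left _
      rw [← hzero, sum_inner] at h0
      have h1 : ∑ j, lam j * ⟪v j, v imin⟫ = 0 := by
        simpa only [real_inner_smul_left] using h0
      rw [← Finset.add_sum_erase _ _ (Finset.mem_univ imin)] at h1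
      have h2 : ⟪v imin, v imin⟫ = 1 := by
        rw [real_inner_self_eq_norm_sq, hvnorm imin]; norm_num
      have h3 : ∑ j ∈ Finset.univ.erase imin, lam j * ⟪v j, v imin⟫
          = ∑ j ∈ Finset.univ.erase imin, lam j * (-1/(d:ℝ)) := by
        refine Finset.sum_congr rfl fun j hj => ?_
        rw [real_inner_comm, hcase j (Finset.ne_of_mem_erase hj)]
      have h4 : ∑ j ∈ Finset.univ.erase imin, lam j = 1 - lam imin := by
        have h5 := Finset.add_sum_erase Finset.univ lam (Finset.mem_univ imin)
        rw [hsum] at h5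
        linarith
      rw [h2, h3, ← Finset.sum_mul, h4, mul_one] at h1
      have hd1' : (d:ℝ) + 1 ≠ 0 := by linarith
      field_simp at h1 ⊢
      linarith
    have hbig : ∀ j, 1/((d:ℝ)+1) ≤ lam j := fun j => hlmin ▸ hmin j (Finset.mem_univ j)
    have hi0 : ((d:ℝ)+1) * lam i0 ≤ 1 := by
      have h5 : ∑ _j ∈ Finset.univ.erase i0, (1/((d:ℝ)+1)) ≤ ∑ j ∈ Finset.univ.erase i0, lam j :=
        Finset.sum_le_sum fun j _ => hbig j
      rw [Finset.sum_const, Finset.card_erase_of_mem (Finset.mem_univ i0), Finset.card_univ,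
        Fintype.card_fin, nsmul_eq_mul] at h5
      have h6 : lam i0 + ∑ j ∈ Finset.univ.erase i0, lam j = 1 := by
        rw [Finset.add_sum_erase _ _ (Finset.mem_univ i0), hsum]
      have h7 : (d:ℝ) * (1/((d:ℝ)+1)) ≤ ∑ j ∈ Finset.univ.erase i0, lam j := by
        have : ((d + 1 - 1 : ℕ) : ℝ) = (d:ℝ) := by
          push_cast [Nat.add_sub_cancel]
          ring
        rw [this] at h5
        exact h5
      have hd1 : (0:ℝ) < (d:ℝ)+1 := by linarith
      have h8 : ((d:ℝ)+1) * ((d:ℝ) * (1/((d:ℝ)+1))) = (d:ℝ) := by field_simp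
      nlinarith [h7, h6, h8, hd1]
    have hk0 := key_lemma d hd f hne_bot hfin hanti hconv v hvnorm hai lam hpos hsum hzero i0 hi0
    exact hk0.2 hsc ⟨j0, Ne.symm hne, hinner⟩
end

section
/- Let d ≥ 2 and f : [0,4] → (-∞,∞] be finite, non-increasing, and convex on (0,4] with lim_{t→0⁺} f(t) = f(0). Let ω = {v_0,...,v_d} ⊂ S^{d-1} be affinely independent with the origin in the interior of conv(ω). Then min_{x ∈ S^{d-1}} ∑_{i=0}^d f(|x - v_i|²) ≤ f(0) + d·f(2 + 2/d). If f is strictly convex on (0,4] and ω is not the vertex set of a regular d-simplex inscribed in S^{d-1}, the inequality is strict. -/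
open Filter Set


lemma chord0 {g : ℝ → ℝ} {R0 τ : ℝ} (hτ : τ ∈ Set.Ioc (0:ℝ) 4)
    (gconv : ConvexOn ℝ (Set.Ioc (0:ℝ) 4) g)
    (glim : Filter.Tendsto g (nhdsWithin 0 (Set.Ioi 0)) (nhds R0))
    {x : ℝ} (hx : x ∈ Set.Ioc 0 τ) :
    g x ≤ ((τ - x)/τ) * R0 + (x/τ) * g τ := by
  obtain ⟨hτ0, hτ4⟩ := hτ
  obtain ⟨hx0, hxτ⟩ := hx
  rcases eq_or_lt_of_le hxτ with rfl | hlt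
  · have : (x - x)/x = 0 := by simp
    rw [this]
    rw [div_self (ne_of_gt hx0)]
    simp
  · -- x < τ
    have hev : ∀ᶠ ε in nhdsWithin (0:ℝ) (Set.Ioi 0),
        g x ≤ ((τ - x)/(τ - ε)) * g ε + ((x - ε)/(τ - ε)) * g τ := by
      filter_upwards [Ioo_mem_nhdsGT_of_mem (by constructor <;> [rfl; exact hx0] :
          (0:ℝ) ∈ Set.Ico 0 x)] with ε hε
      obtain ⟨hε0, hεx⟩ := hε
      have hden : (0:ℝ) < τ - ε := by linarith
      have ha : (0:ℝ) ≤ (τ - x)/(τ - ε) := by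
        apply div_nonneg <;> linarith
      have hb : (0:ℝ) ≤ (x - ε)/(τ - ε) := by
        apply div_nonneg <;> linarith
      have hab : (τ - x)/(τ - ε) + (x - ε)/(τ - ε) = 1 := by
        rw [← add_div, div_eq_one_iff_eq (ne_of_gt hden)]; ring
      have hcomb : ((τ - x)/(τ - ε)) • ε + ((x - ε)/(τ - ε)) • τ = x := by
        rw [smul_eq_mul, smul_eq_mul, div_mul_eq_mul_div, div_mul_eq_mul_div, ← add_div,
          div_eq_iff (ne_of_gt hden)]
        ring
      have := gconv.2 (x := ε) (y := τ) ⟨hε0, by linarith⟩ ⟨hτ0, hτ4⟩ ha hb hab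
      rw [hcomb] at this
      simpa using this
    refine ge_of_tendsto ?_ hev
    have h1 : Filter.Tendsto (fun ε : ℝ => (τ - x)/(τ - ε)) (nhdsWithin 0 (Set.Ioi 0))
        (nhds ((τ - x)/τ)) := by
      apply Filter.Tendsto.mono_left _ nhdsWithin_le_nhds
      have hc : ContinuousAt (fun ε : ℝ => (τ - x)/(τ - ε)) 0 := by
        apply ContinuousAt.div
        · fun_prop
        · fun_prop
        · simpa using ne_of_gt hτ0
      have := hc.tendsto
      simpa using this
    have h2 : Filter.Tendsto (fun ε : ℝ => (x - ε)/(τ - ε)) (nhdsWithin 0 (Set.Ioi 0))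
        (nhds (x/τ)) := by
      apply Filter.Tendsto.mono_left _ nhdsWithin_le_nhds
      have hc : ContinuousAt (fun ε : ℝ => (x - ε)/(τ - ε)) 0 := by
        apply ContinuousAt.div
        · fun_prop
        · fun_prop
        · simpa using ne_of_gt hτ0
      have := hc.tendsto
      simpa using this
    exact (h1.mul glim).add (h2.mul tendsto_const_nhds)

lemma strict_anti_aux {g : ℝ → ℝ} (hsc : StrictConvexOn ℝ (Set.Ioc (0:ℝ) 4) g)
    (ganti : AntitoneOn g (Set.Ioc (0:ℝ) 4)) {a b : ℝ} (ha : 0 < a) (hab : a < b)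
    (hb : b ≤ 4) : g b < g a := by
  have hmem_a : a ∈ Set.Ioc (0:ℝ) 4 := ⟨ha, by linarith⟩
  have hmem_b : b ∈ Set.Ioc (0:ℝ) 4 := ⟨by linarith, hb⟩
  have h := hsc.2 hmem_a hmem_b (ne_of_lt hab) (by norm_num : (0:ℝ) < 1/2)
    (by norm_num : (0:ℝ) < 1/2) (by norm_num)
  simp only [smul_eq_mul] at h
  have hmid : (1/2:ℝ) * a + (1/2:ℝ) * b = (a+b)/2 := by ring
  rw [hmid] at h
  have hmem_m : (a+b)/2 ∈ Set.Ioc (0:ℝ) 4 := ⟨by linarith, by linarith⟩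
  have h2 : g b ≤ g ((a+b)/2) := ganti hmem_m hmem_b (by linarith)
  linarith

lemma chord0_strict {g : ℝ → ℝ} {R0 τ : ℝ} (hτ : τ ∈ Set.Ioc (0:ℝ) 4)
    (hsc : StrictConvexOn ℝ (Set.Ioc (0:ℝ) 4) g)
    (gconv : ConvexOn ℝ (Set.Ioc (0:ℝ) 4) g)
    (glim : Filter.Tendsto g (nhdsWithin 0 (Set.Ioi 0)) (nhds R0))
    {x : ℝ} (hx0 : 0 < x) (hxτ : x < τ) :
    g x < ((τ - x)/τ) * R0 + (x/τ) * g τ := by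
  obtain ⟨hτ0, hτ4⟩ := hτ
  have hden : (0:ℝ) < τ - x/2 := by linarith
  have hne1 : τ - x/2 ≠ 0 := ne_of_gt hden
  have hne2 : τ ≠ 0 := ne_of_gt hτ0
  have hne3 : τ*2 - x ≠ 0 := by intro h; apply hne1; linarith
  set a : ℝ := (τ - x)/(τ - x/2) with ha_def
  set b : ℝ := (x/2)/(τ - x/2) with hb_def
  have ha : 0 < a := by apply div_pos <;> linarith
  have hb : 0 < b := by apply div_pos <;> linarith
  have hab : a + b = 1 := by
    rw [ha_def, hb_def, ← add_div, div_eq_one_iff_eq hne1]; ring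
  have hcomb : a • (x/2) + b • τ = x := by
    simp only [smul_eq_mul]
    rw [ha_def, hb_def, div_mul_eq_mul_div, div_mul_eq_mul_div, ← add_div,
      div_eq_iff hne1]; ring
  have hmem1 : x/2 ∈ Set.Ioc (0:ℝ) 4 := ⟨by linarith, by linarith⟩
  have hmem2 : τ ∈ Set.Ioc (0:ℝ) 4 := ⟨hτ0, hτ4⟩
  have h := hsc.2 hmem1 hmem2 (by intro hh; linarith : x/2 ≠ τ) ha hb hab
  rw [hcomb] at h
  simp only [smul_eq_mul] at h
  have hch : g (x/2) ≤ ((τ - x/2)/τ)*R0 + ((x/2)/τ) * g τ :=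
    chord0 hmem2 gconv glim ⟨by linarith, by linarith⟩
  have halg : a * (((τ - x/2)/τ)*R0 + ((x/2)/τ) * g τ) + b * g τ
      = ((τ - x)/τ) * R0 + (x/τ) * g τ := by
    have h4 : -(τ*x*2) + τ^2*4 ≠ 0 := by
      have he : -(τ*x*2) + τ^2*4 = 2*τ*(τ*2 - x) := by ring
      rw [he]; exact mul_ne_zero (mul_ne_zero two_ne_zero hne2) hne3
    rw [ha_def, hb_def]
    field_simp [hne3, h4]
    ring
  calc g x < a * g (x/2) + b * g τ := h
    _ ≤ a * (((τ - x/2)/τ)*R0 + ((x/2)/τ) * g τ) + b * g τ := by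
        have := mul_le_mul_of_nonneg_left hch (le_of_lt ha); linarith
    _ = ((τ - x)/τ) * R0 + (x/τ) * g τ := halg

lemma anal_le (d : ℕ) (hd : 2 ≤ d) {g : ℝ → ℝ} {R0 : ℝ}
    (ganti : AntitoneOn g (Set.Ioc (0:ℝ) 4))
    (gconv : ConvexOn ℝ (Set.Ioc (0:ℝ) 4) g)
    (gle : ∀ t ∈ Set.Ioc (0:ℝ) 4, g t ≤ R0)
    (glim : Filter.Tendsto g (nhdsWithin 0 (Set.Ioi 0)) (nhds R0))
    {α β Gα : ℝ} (hα0 : 0 ≤ α) (hα2 : α ≤ 2) (hβ2 : 2 ≤ β) (hβ4 : β ≤ 4)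
    (hsum : 2*(d:ℝ) + 2 ≤ α + d * β)
    (hG1 : Gα ≤ R0) (hG2 : 0 < α → Gα = g α) :
    Gα + d * g β ≤ R0 + d * g (2 + 2/(d:ℝ)) := by
  have hd0 : (0:ℝ) < d := by
    have : (2:ℝ) ≤ d := by exact_mod_cast hd
    linarith
  set τ : ℝ := 2 + 2/(d:ℝ) with hτ_def
  have hτgt2 : 2 < τ := by
    have : 0 < 2/(d:ℝ) := by positivity
    simp only [hτ_def]; linarith
  have hτle3 : τ ≤ 3 := by
    have : 2/(d:ℝ) ≤ 1 := by
      rw [div_le_one hd0]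
      have : (2:ℝ) ≤ d := by exact_mod_cast hd
      linarith
    simp only [hτ_def]; linarith
  have hτmem : τ ∈ Set.Ioc (0:ℝ) 4 := ⟨by linarith, by linarith⟩
  have hdτ : (d:ℝ) * τ = 2*d + 2 := by
    simp only [hτ_def]
    field_simp
  by_cases hcase : τ ≤ β
  · have h1 : g β ≤ g τ := ganti hτmem ⟨by linarith, hβ4⟩ hcase
    have h2 := mul_le_mul_of_nonneg_left h1 (le_of_lt hd0)
    linarith
  · push_neg at hcase
    have hα_pos : 0 < α := by
      have h3 : (d:ℝ)*β < d*τ := mul_lt_mul_of_pos_left hcase hd0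
      rw [hdτ] at h3
      linarith
    have hGα := hG2 hα_pos
    have chA : g α ≤ ((τ - α)/τ)*R0 + (α/τ)*g τ :=
      chord0 hτmem gconv glim ⟨hα_pos, by linarith⟩
    have chB : g β ≤ ((τ - β)/τ)*R0 + (β/τ)*g τ :=
      chord0 hτmem gconv glim ⟨by linarith, le_of_lt hcase⟩
    have hgτ : g τ ≤ R0 := gle τ hτmem
    have hτ0 : (0:ℝ) < τ := by linarith
    have hc : (d:ℝ) ≤ (α + d*β)/τ := by
      rw [le_div_iff₀ hτ0]
      linarith [hdτ]
    have key : ((d:ℝ)+1 - (α + d*β)/τ)*R0 + ((α + d*β)/τ)*g τ ≤ R0 + d * g τ := by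
      have hp := mul_le_mul_of_nonneg_left hgτ (sub_nonneg.2 hc)
      nlinarith [hp]
    have e : ((d:ℝ)+1 - (α + d*β)/τ)*R0 + ((α + d*β)/τ)*g τ
        = (((τ - α)/τ)*R0 + (α/τ)*g τ) + d*(((τ - β)/τ)*R0 + (β/τ)*g τ) := by
      field_simp
      ring
    have comb : g α + d * g β ≤ ((d:ℝ)+1 - (α + d*β)/τ)*R0 + ((α + d*β)/τ)*g τ := by
      rw [e]
      have h4 := mul_le_mul_of_nonneg_left chB (le_of_lt hd0)
      linarith
    rw [hGα]
    linarith

lemma anal_lt (d : ℕ) (hd : 2 ≤ d) {g : ℝ → ℝ} {R0 : ℝ}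
    (hsc : StrictConvexOn ℝ (Set.Ioc (0:ℝ) 4) g)
    (ganti : AntitoneOn g (Set.Ioc (0:ℝ) 4))
    (gconv : ConvexOn ℝ (Set.Ioc (0:ℝ) 4) g)
    (gle : ∀ t ∈ Set.Ioc (0:ℝ) 4, g t ≤ R0)
    (glim : Filter.Tendsto g (nhdsWithin 0 (Set.Ioi 0)) (nhds R0))
    {α β Gα : ℝ} (hα0 : 0 ≤ α) (hα2 : α ≤ 2) (hβ2 : 2 ≤ β) (hβ4 : β ≤ 4)
    (hsum : 2*(d:ℝ) + 2 ≤ α + d * β)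
    (hG1 : Gα ≤ R0) (hG2 : 0 < α → Gα = g α)
    (hne : α ≠ 0 ∨ β ≠ 2 + 2/(d:ℝ)) :
    Gα + d * g β < R0 + d * g (2 + 2/(d:ℝ)) := by
  have hd0 : (0:ℝ) < d := by
    have : (2:ℝ) ≤ d := by exact_mod_cast hd
    linarith
  set τ : ℝ := 2 + 2/(d:ℝ) with hτ_def
  have hτgt2 : 2 < τ := by
    have : 0 < 2/(d:ℝ) := by positivity
    simp only [hτ_def]; linarith
  have hτle3 : τ ≤ 3 := by
    have : 2/(d:ℝ) ≤ 1 := by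
      rw [div_le_one hd0]
      have : (2:ℝ) ≤ d := by exact_mod_cast hd
      linarith
    simp only [hτ_def]; linarith
  have hτmem : τ ∈ Set.Ioc (0:ℝ) 4 := ⟨by linarith, by linarith⟩
  have hdτ : (d:ℝ) * τ = 2*d + 2 := by
    simp only [hτ_def]
    field_simp
  have hτ0 : (0:ℝ) < τ := by linarith
  have hgτ : g τ ≤ R0 := gle τ hτmem
  rcases lt_trichotomy β τ with hcase | hcase | hcase
  · -- β < τ : strict chord at β
    have hα_pos : 0 < α := by
      have h3 : (d:ℝ)*β < d*τ := mul_lt_mul_of_pos_left hcase hd0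
      rw [hdτ] at h3
      linarith
    have hGα := hG2 hα_pos
    have chA : g α ≤ ((τ - α)/τ)*R0 + (α/τ)*g τ :=
      chord0 hτmem gconv glim ⟨hα_pos, by linarith⟩
    have chB : g β < ((τ - β)/τ)*R0 + (β/τ)*g τ :=
      chord0_strict hτmem hsc gconv glim (by linarith) hcase
    have hc : (d:ℝ) ≤ (α + d*β)/τ := by
      rw [le_div_iff₀ hτ0]
      linarith [hdτ]
    have key : ((d:ℝ)+1 - (α + d*β)/τ)*R0 + ((α + d*β)/τ)*g τ ≤ R0 + d * g τ := by
      have hp := mul_le_mul_of_nonneg_left hgτ (sub_nonneg.2 hc)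
      nlinarith [hp]
    have e : ((d:ℝ)+1 - (α + d*β)/τ)*R0 + ((α + d*β)/τ)*g τ
        = (((τ - α)/τ)*R0 + (α/τ)*g τ) + d*(((τ - β)/τ)*R0 + (β/τ)*g τ) := by
      field_simp
      ring
    have comb : g α + d * g β < ((d:ℝ)+1 - (α + d*β)/τ)*R0 + ((α + d*β)/τ)*g τ := by
      rw [e]
      have h4 := mul_lt_mul_of_pos_left chB hd0
      linarith
    rw [hGα]
    linarith
  · -- β = τ : need α ≠ 0
    have hαne : α ≠ 0 := by
      rcases hne with h | h
      · exact h
      · exact absurd hcase h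
    have hα_pos : 0 < α := lt_of_le_of_ne hα0 (Ne.symm hαne)
    have hGα := hG2 hα_pos
    have h1 : g α < g (α/2) := strict_anti_aux hsc ganti (by linarith) (by linarith) (by linarith)
    have h2 : g (α/2) ≤ R0 := gle _ ⟨by linarith, by linarith⟩
    rw [hGα, hcase]
    have := mul_le_mul_of_nonneg_left (le_refl (g τ)) (le_of_lt hd0)
    linarith
  · -- β > τ : strict monotone
    have h1 : g β < g τ := strict_anti_aux hsc ganti (by linarith) hcase hβ4
    have h2 := mul_lt_mul_of_pos_left h1 hd0
    linarith

lemma exists_normal (d : ℕ) (hd : 2 ≤ d) (v : Fin (d+1) → EuclideanSpace ℝ (Fin d))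
    (k : Fin (d+1)) :
    ∃ u : EuclideanSpace ℝ (Fin d), ‖u‖ = 1 ∧ ∃ c : ℝ, c ≤ 0 ∧
      ∀ j, j ≠ k → (inner ℝ u (v j) : ℝ) = c := by
  classical
  have : Nontrivial (Fin (d+1)) := by
    constructor
    exact ⟨⟨0, by omega⟩, ⟨1, by omega⟩, by simp [Fin.ext_iff]⟩
  obtain ⟨j0, hj0⟩ := exists_ne k
  set s : Finset (Fin (d+1)) := (Finset.univ.erase k).erase j0 with hs_def
  set t : Finset (EuclideanSpace ℝ (Fin d)) := s.image (fun j => v j - v j0) with ht_def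
  set S : Submodule ℝ (EuclideanSpace ℝ (Fin d)) := Submodule.span ℝ (t : Set _) with hS_def
  have hcard : s.card = d - 1 := by
    rw [hs_def, Finset.card_erase_of_mem, Finset.card_erase_of_mem] <;>
      simp [hj0, Finset.mem_erase]
  have hrank : Module.finrank ℝ S ≤ d - 1 := by
    calc Module.finrank ℝ S ≤ t.card := finrank_span_finset_le_card t
      _ ≤ s.card := Finset.card_image_le
      _ = d - 1 := hcard
  have hSne : S ≠ ⊤ := by
    intro h
    rw [h] at hrank
    rw [finrank_top] at hrank
    rw [finrank_euclideanSpace_fin] at hrank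
    omega
  have horth : Sᗮ ≠ ⊥ := by
    rw [Ne, Submodule.orthogonal_eq_bot_iff]
    exact hSne
  obtain ⟨u0, hu0S, hu0ne⟩ := Submodule.ne_bot_iff _ |>.mp horth
  set u1 : EuclideanSpace ℝ (Fin d) := ‖u0‖⁻¹ • u0 with hu1_def
  have hu1S : u1 ∈ Sᗮ := Submodule.smul_mem _ _ hu0S
  have hu1norm : ‖u1‖ = 1 := norm_smul_inv_norm hu0ne
  have hconst : ∀ j, j ≠ k → (inner ℝ u1 (v j) : ℝ) = inner ℝ u1 (v j0) := by
    intro j hj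
    by_cases hjj0 : j = j0
    · rw [hjj0]
    · have hmem : v j - v j0 ∈ S := by
        apply Submodule.subset_span
        rw [ht_def]
        exact Finset.mem_coe.2 (Finset.mem_image_of_mem _ (Finset.mem_erase.2 ⟨hjj0, Finset.mem_erase.2 ⟨hj, Finset.mem_univ j⟩⟩))
      have := Submodule.inner_right_of_mem_orthogonal hmem hu1S
      have h2 : (inner ℝ u1 (v j - v j0) : ℝ) = 0 := by
        rw [real_inner_comm]
        exact this
      rw [inner_sub_right] at h2
      linarith
  by_cases hc : (inner ℝ u1 (v j0) : ℝ) ≤ 0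
  · exact ⟨u1, hu1norm, inner ℝ u1 (v j0), hc, hconst⟩
  · refine ⟨-u1, by simpa using hu1norm, -(inner ℝ u1 (v j0) : ℝ), by linarith, ?_⟩
    intro j hj
    rw [inner_neg_left, hconst j hj]

lemma per_k (d : ℕ) (hd : 2 ≤ d) (f : ℝ → EReal)
    (hne_bot : ∀ t ∈ Set.Icc (0:ℝ) 4, f t ≠ ⊥)
    (hfin : ∀ t ∈ Set.Ioc (0:ℝ) 4, f t ≠ ⊤)
    (hanti : AntitoneOn f (Set.Ioc (0:ℝ) 4))
    (hconv : ConvexOn ℝ (Set.Ioc (0:ℝ) 4) (fun t => (f t).toReal))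
    (hlim : Filter.Tendsto f (nhdsWithin 0 (Set.Ioi 0)) (nhds (f 0)))
    (v : Fin (d+1) → EuclideanSpace ℝ (Fin d))
    (hvnorm : ∀ i, ‖v i‖ = 1)
    (lam : Fin (d+1) → ℝ) (hlam0 : ∀ i, 0 ≤ lam i)
    (hlamsum : ∑ i, lam i = 1) (hlamv : ∑ i, lam i • v i = 0)
    (k : Fin (d+1)) (hk : 1/((d:ℝ)+1) ≤ lam k) (hf0top : f 0 ≠ ⊤) :
    (⨅ y : Metric.sphere (0 : EuclideanSpace ℝ (Fin d)) 1,
        ∑ i, f (‖(y : EuclideanSpace ℝ (Fin d)) - v i‖^2)) ≤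
      f 0 + ((d:ℝ) : EReal) * f (2 + 2/(d:ℝ)) ∧
    (StrictConvexOn ℝ (Set.Ioc (0:ℝ) 4) (fun t => (f t).toReal) →
      ((∀ j, j ≠ k → (inner ℝ (v k) (v j) : ℝ) = -1/(d:ℝ)) ∧ lam k = 1/((d:ℝ)+1)) ∨
      (⨅ y : Metric.sphere (0 : EuclideanSpace ℝ (Fin d)) 1,
          ∑ i, f (‖(y : EuclideanSpace ℝ (Fin d)) - v i‖^2)) <
        f 0 + ((d:ℝ) : EReal) * f (2 + 2/(d:ℝ))) := by
  classical
  have hd0 : (0:ℝ) < d := by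
    have : (2:ℝ) ≤ d := by exact_mod_cast hd
    linarith
  have hd1 : (0:ℝ) < (d:ℝ)+1 := by linarith
  have : Nontrivial (Fin (d+1)) := by
    constructor
    exact ⟨⟨0, by omega⟩, ⟨1, by omega⟩, by simp [Fin.ext_iff]⟩
  obtain ⟨u, hunorm, c, hc0, hcprop⟩ := exists_normal d hd v k
  set h : ℝ := -c with hh_def
  have hh0 : 0 ≤ h := by rw [hh_def]; linarith
  set gk : ℝ := (inner ℝ u (v k) : ℝ) with hgk_def
  -- the lambda relation
  have hrel : lam k * gk = (1 - lam k) * h := by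
    have h1 : (inner ℝ u (∑ i, lam i • v i) : ℝ) = 0 := by
      rw [hlamv]; exact inner_zero_right u
    rw [inner_sum] at h1
    simp_rw [real_inner_smul_right] at h1
    rw [← Finset.add_sum_erase _ _ (Finset.mem_univ k)] at h1
    have h2 : ∑ i ∈ Finset.univ.erase k, lam i * (inner ℝ u (v i):ℝ)
        = ∑ i ∈ Finset.univ.erase k, lam i * c :=
      Finset.sum_congr rfl fun i hi => by rw [hcprop i (Finset.ne_of_mem_erase hi)]
    rw [h2, ← Finset.sum_mul] at h1
    have h3 : ∑ i ∈ Finset.univ.erase k, lam i = 1 - lam k := by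
      have := Finset.add_sum_erase Finset.univ lam (Finset.mem_univ k)
      rw [hlamsum] at this
      linarith
    rw [h3] at h1
    rw [hh_def]
    linarith
  have hlamk_pos : 0 < lam k := lt_of_lt_of_le (by positivity) hk
  have hlamk_le1 : lam k ≤ 1 := by
    rw [← hlamsum]
    exact Finset.single_le_sum (fun i _ => hlam0 i) (Finset.mem_univ k)
  have hgk0 : 0 ≤ gk := by
    have h4 : 0 ≤ (1 - lam k) * h := mul_nonneg (by linarith) hh0
    nlinarith [hrel]
  have hgk1 : gk ≤ 1 := by
    have h5 := real_inner_le_norm u (v k)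
    rw [hunorm, hvnorm k] at h5
    rw [hgk_def]
    linarith
  obtain ⟨j1, hj1⟩ := exists_ne k
  have hh1 : h ≤ 1 := by
    have h6 := abs_real_inner_le_norm u (v j1)
    rw [hunorm, hvnorm j1, hcprop j1 hj1] at h6
    rw [hh_def]
    have := abs_le.1 (by simpa using h6)
    linarith [this.1]
  have hdh_g : gk ≤ (d:ℝ) * h := by
    have h7 : (1:ℝ) ≤ lam k * ((d:ℝ)+1) := by
      rw [div_le_iff₀ hd1] at hk
      linarith
    have h8 : 0 ≤ h * (((d:ℝ)+1)*lam k - 1) := mul_nonneg hh0 (by nlinarith)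
    by_contra hcon
    push_neg at hcon
    have h9 := mul_lt_mul_of_pos_left hcon hlamk_pos
    nlinarith [hrel]
  set α : ℝ := 2 - 2*gk with hα_def
  set β : ℝ := 2 + 2*h with hβ_def
  have hα0 : 0 ≤ α := by rw [hα_def]; linarith
  have hα2 : α ≤ 2 := by rw [hα_def]; linarith
  have hβ2 : 2 ≤ β := by rw [hβ_def]; linarith
  have hβ4 : β ≤ 4 := by rw [hβ_def]; linarith
  have hsum : 2*(d:ℝ) + 2 ≤ α + d * β := by
    have he : α + (d:ℝ)*β = 2+2*(d:ℝ) + 2*((d:ℝ)*h - gk) := by rw [hα_def, hβ_def]; ring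
    rw [he]
    linarith [hdh_g]
  -- norms
  have hnormsq : ∀ i, ‖u - v i‖^2 = 2 - 2*(inner ℝ u (v i):ℝ) := by
    intro i
    rw [norm_sub_sq_real, hunorm, hvnorm i]
    ring
  have htk : ‖u - v k‖^2 = α := by rw [hnormsq k, hα_def, hgk_def]
  have htj : ∀ j, j ≠ k → ‖u - v j‖^2 = β := by
    intro j hj
    rw [hnormsq j, hcprop j hj, hβ_def, hh_def]
    ring
  set τ : ℝ := 2 + 2/(d:ℝ) with hτ_def
  have hτmem : τ ∈ Set.Ioc (0:ℝ) 4 := by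
    constructor
    · rw [hτ_def]; positivity
    · rw [hτ_def]
      have : 2/(d:ℝ) ≤ 1 := by
        rw [div_le_one hd0]
        have : (2:ℝ) ≤ d := by exact_mod_cast hd
        linarith
      linarith
  -- EReal values are real
  have hfα_ne_top : f α ≠ ⊤ := by
    rcases eq_or_lt_of_le hα0 with heq | hpos
    · rw [← heq]; exact hf0top
    · exact hfin α ⟨hpos, by linarith⟩
  have hfα_ne_bot : f α ≠ ⊥ := hne_bot α ⟨hα0, by linarith⟩
  have hfβ_ne_top : f β ≠ ⊤ := hfin β ⟨by linarith, hβ4⟩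
  have hfβ_ne_bot : f β ≠ ⊥ := hne_bot β ⟨by linarith, hβ4⟩
  have hfτ_ne_top : f τ ≠ ⊤ := hfin τ hτmem
  have hfτ_ne_bot : f τ ≠ ⊥ := hne_bot τ ⟨le_of_lt hτmem.1, hτmem.2⟩
  have hf0_ne_bot : f 0 ≠ ⊥ := hne_bot 0 ⟨le_refl 0, by norm_num⟩
  set Gα : ℝ := (f α).toReal with hGα_def
  set B : ℝ := (f β).toReal with hB_def
  set T : ℝ := (f τ).toReal with hT_def
  set R0 : ℝ := (f 0).toReal with hR0_def
  have hfα : f α = (Gα : EReal) := (EReal.coe_toReal hfα_ne_top hfα_ne_bot).symm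
  have hfβ : f β = (B : EReal) := (EReal.coe_toReal hfβ_ne_top hfβ_ne_bot).symm
  have hfτ : f τ = (T : EReal) := (EReal.coe_toReal hfτ_ne_top hfτ_ne_bot).symm
  have hf0 : f 0 = (R0 : EReal) := (EReal.coe_toReal hf0top hf0_ne_bot).symm
  -- real function facts
  have hfle : ∀ t ∈ Set.Ioc (0:ℝ) 4, f t ≤ f 0 := by
    intro t ht
    apply ge_of_tendsto hlim
    filter_upwards [Ioo_mem_nhdsGT_of_mem (⟨le_refl 0, ht.1⟩ : (0:ℝ) ∈ Set.Ico 0 t)]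
      with s hs
    exact hanti ⟨hs.1, by linarith [ht.2, hs.2]⟩ ht (le_of_lt hs.2)
  have gle : ∀ t ∈ Set.Ioc (0:ℝ) 4, (f t).toReal ≤ R0 := by
    intro t ht
    exact EReal.toReal_le_toReal (hfle t ht) (hne_bot t ⟨le_of_lt ht.1, ht.2⟩) hf0top
  have ganti : AntitoneOn (fun t => (f t).toReal) (Set.Ioc (0:ℝ) 4) := by
    intro a ha b hb hab
    exact EReal.toReal_le_toReal (hanti ha hb hab) (hne_bot b ⟨le_of_lt hb.1, hb.2⟩)
      (hfin a ha)
  have glim : Filter.Tendsto (fun t => (f t).toReal) (nhdsWithin 0 (Set.Ioi 0)) (nhds R0) :=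
    (EReal.tendsto_toReal hf0top hf0_ne_bot).comp hlim
  -- value at u
  have humem : u ∈ Metric.sphere (0 : EuclideanSpace ℝ (Fin d)) 1 := by
    rw [mem_sphere_zero_iff_norm]
    exact hunorm
  have hval : ∑ i, f (‖u - v i‖^2) = ((Gα + d*B : ℝ) : EReal) := by
    rw [← Finset.add_sum_erase _ _ (Finset.mem_univ k)]
    have h6 : ∑ i ∈ Finset.univ.erase k, f (‖u - v i‖^2)
        = ∑ _i ∈ Finset.univ.erase k, ((B:ℝ) : EReal) :=
      Finset.sum_congr rfl fun i hi => by rw [htj i (Finset.ne_of_mem_erase hi), hfβ]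
    rw [htk, hfα, h6, Finset.sum_const]
    have hcard : (Finset.univ.erase k).card = d := by
      rw [Finset.card_erase_of_mem (Finset.mem_univ k), Finset.card_univ, Fintype.card_fin]
      omega
    rw [hcard, ← EReal.coe_nsmul, ← EReal.coe_add, nsmul_eq_mul]
  have hRHS : f 0 + ((d:ℝ):EReal) * f τ = ((R0 + d*T : ℝ) : EReal) := by
    rw [hf0, hfτ, ← EReal.coe_mul, ← EReal.coe_add]
  have hG1 : Gα ≤ R0 := by
    rcases eq_or_lt_of_le hα0 with heq | hpos
    · rw [hGα_def, ← heq, ← hR0_def]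
    · exact gle α ⟨hpos, by linarith⟩
  have hG2 : 0 < α → Gα = (f α).toReal := fun _ => rfl
  have hle_val : Gα + d * B ≤ R0 + d * T :=
    anal_le d hd ganti hconv gle glim hα0 hα2 hβ2 hβ4 hsum hG1 hG2
  have hinf_le : (⨅ y : Metric.sphere (0 : EuclideanSpace ℝ (Fin d)) 1,
      ∑ i, f (‖(y : EuclideanSpace ℝ (Fin d)) - v i‖^2)) ≤ ∑ i, f (‖u - v i‖^2) :=
    iInf_le _ (⟨u, humem⟩ : Metric.sphere (0 : EuclideanSpace ℝ (Fin d)) 1)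
  constructor
  · calc (⨅ y : Metric.sphere (0 : EuclideanSpace ℝ (Fin d)) 1,
        ∑ i, f (‖(y : EuclideanSpace ℝ (Fin d)) - v i‖^2)) ≤ ∑ i, f (‖u - v i‖^2) := hinf_le
      _ = ((Gα + d*B : ℝ) : EReal) := hval
      _ ≤ ((R0 + d*T : ℝ) : EReal) := EReal.coe_le_coe_iff.2 hle_val
      _ = f 0 + ((d:ℝ):EReal) * f τ := hRHS.symm
  · intro hsc
    by_cases hcase : α = 0 ∧ β = τ
    · left
      obtain ⟨hA, hB2⟩ := hcase
      have hgk_eq : gk = 1 := by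
        rw [hα_def] at hA
        linarith
      have huv : u = v k := by
        have h10 : ‖u - v k‖^2 = 0 := by rw [htk, hA]
        have h11 : ‖u - v k‖ = 0 := by
          have := pow_eq_zero_iff (n := 2) (by norm_num) |>.mp h10
          exact this
        rw [norm_eq_zero, sub_eq_zero] at h11
        exact h11
      have hh_eq : h = 1/(d:ℝ) := by
        rw [hβ_def] at hB2
        rw [hτ_def] at hB2
        have : 2*h = 2/(d:ℝ) := by linarith
        have hdd : (d:ℝ) ≠ 0 := ne_of_gt hd0
        field_simp at this ⊢
        linarith
      constructor
      · intro j hj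
        have := hcprop j hj
        rw [← huv, this]
        rw [hh_def] at hh_eq
        rw [neg_div]
        linarith
      · rw [hgk_eq, hh_eq] at hrel
        have hdd : (d:ℝ) ≠ 0 := ne_of_gt hd0
        field_simp at hrel ⊢
        linarith
    · right
      have hne2 : α ≠ 0 ∨ β ≠ τ := by tauto
      have hlt_val : Gα + d * B < R0 + d * T :=
        anal_lt d hd hsc ganti hconv gle glim hα0 hα2 hβ2 hβ4 hsum hG1 hG2 hne2
      calc (⨅ y : Metric.sphere (0 : EuclideanSpace ℝ (Fin d)) 1,
          ∑ i, f (‖(y : EuclideanSpace ℝ (Fin d)) - v i‖^2)) ≤ ∑ i, f (‖u - v i‖^2) := hinf_le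
        _ = ((Gα + d*B : ℝ) : EReal) := hval
        _ < ((R0 + d*T : ℝ) : EReal) := EReal.coe_lt_coe_iff.2 hlt_val
        _ = f 0 + ((d:ℝ):EReal) * f τ := hRHS.symm

lemma ereal_coe_sum {ι : Type*} (s : Finset ι) (r : ι → ℝ) :
    ((∑ i ∈ s, r i : ℝ) : EReal) = ∑ i ∈ s, ((r i) : EReal) := by
  induction s using Finset.cons_induction with
  | empty => simp
  | cons a s ha ih => rw [Finset.sum_cons, Finset.sum_cons, EReal.coe_add, ih]

theorem stmt_16 (d : ℕ) (hd : 2 ≤ d) (f : ℝ → EReal)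
    (hne_bot : ∀ t ∈ Set.Icc (0:ℝ) 4, f t ≠ ⊥)
    (hfin : ∀ t ∈ Set.Ioc (0:ℝ) 4, f t ≠ ⊤)
    (hanti : AntitoneOn f (Set.Ioc (0:ℝ) 4))
    (hconv : ConvexOn ℝ (Set.Ioc (0:ℝ) 4) (fun t => (f t).toReal))
    (hlim : Filter.Tendsto f (nhdsWithin 0 (Set.Ioi 0)) (nhds (f 0)))
    (v : Fin (d+1) → EuclideanSpace ℝ (Fin d))
    (hvnorm : ∀ i, ‖v i‖ = 1)
    (hai : AffineIndependent ℝ v)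
    (hint : (0 : EuclideanSpace ℝ (Fin d)) ∈ interior (convexHull ℝ (Set.range v))) :
    (⨅ y : Metric.sphere (0 : EuclideanSpace ℝ (Fin d)) 1,
        ∑ i, f (‖(y : EuclideanSpace ℝ (Fin d)) - v i‖^2)) ≤
      f 0 + ((d:ℝ) : EReal) * f (2 + 2/(d:ℝ)) ∧
    (StrictConvexOn ℝ (Set.Ioc (0:ℝ) 4) (fun t => (f t).toReal) →
      ¬ (∀ i j, i ≠ j → (inner ℝ (v i) (v j) : ℝ) = -1/(d:ℝ)) →
      (⨅ y : Metric.sphere (0 : EuclideanSpace ℝ (Fin d)) 1,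
          ∑ i, f (‖(y : EuclideanSpace ℝ (Fin d)) - v i‖^2)) <
        f 0 + ((d:ℝ) : EReal) * f (2 + 2/(d:ℝ))) := by
  classical
  have hd0 : (0:ℝ) < d := by
    have : (2:ℝ) ≤ d := by exact_mod_cast hd
    linarith
  have hτmem : (2 + 2/(d:ℝ)) ∈ Set.Ioc (0:ℝ) 4 := by
    constructor
    · positivity
    · have : 2/(d:ℝ) ≤ 1 := by
        rw [div_le_one hd0]
        have : (2:ℝ) ≤ d := by exact_mod_cast hd
        linarith
      linarith
  have hfτ_ne_top : f (2 + 2/(d:ℝ)) ≠ ⊤ := hfin _ hτmem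
  have hfτ_ne_bot : f (2 + 2/(d:ℝ)) ≠ ⊥ := hne_bot _ ⟨le_of_lt hτmem.1, hτmem.2⟩
  by_cases hf0top : f 0 = ⊤
  · -- trivial case: RHS = ⊤
    have hfτ : f (2 + 2/(d:ℝ)) = ((f (2 + 2/(d:ℝ))).toReal : EReal) :=
      (EReal.coe_toReal hfτ_ne_top hfτ_ne_bot).symm
    have hRHStop : f 0 + ((d:ℝ):EReal) * f (2 + 2/(d:ℝ)) = ⊤ := by
      rw [hf0top, hfτ, ← EReal.coe_mul]
      exact EReal.top_add_coe _
    constructor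
    · rw [hRHStop]; exact le_top
    · intro _ _
      rw [hRHStop]
      -- find a point on the sphere distinct from all v i
      have hrank : 1 < Module.rank ℝ (EuclideanSpace ℝ (Fin d)) := by
        rw [← Module.finrank_eq_rank, finrank_euclideanSpace_fin]
        exact_mod_cast (by omega : 1 < d)
      have hconn : IsConnected (Metric.sphere (0 : EuclideanSpace ℝ (Fin d)) 1) :=
        isConnected_sphere hrank 0 zero_le_one
      have hnontriv : (Metric.sphere (0 : EuclideanSpace ℝ (Fin d)) 1).Nontrivial := by
        set i0 : Fin d := ⟨0, by omega⟩ with hi0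
        set i1 : Fin d := ⟨1, by omega⟩ with hi1
        have h1 : i0 ≠ i1 := by simp [hi0, hi1, Fin.ext_iff]
        refine ⟨EuclideanSpace.single i0 (1:ℝ), ?_,
                EuclideanSpace.single i1 (1:ℝ), ?_, ?_⟩
        · rw [mem_sphere_zero_iff_norm, EuclideanSpace.norm_single]; norm_num
        · rw [mem_sphere_zero_iff_norm, EuclideanSpace.norm_single]; norm_num
        · intro hcontra
          have h2 := congrArg (fun z : EuclideanSpace ℝ (Fin d) => z i0) hcontra
          rw [EuclideanSpace.single_apply, EuclideanSpace.single_apply] at h2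
          simp [h1] at h2
      have hinf : (Metric.sphere (0 : EuclideanSpace ℝ (Fin d)) 1).Infinite :=
        hconn.isPreconnected.infinite_of_nontrivial hnontriv
      obtain ⟨y, hy⟩ := (hinf.diff (Set.finite_range v)).nonempty
      obtain ⟨hy1, hy2⟩ := hy
      have hynorm : ‖y‖ = 1 := by rwa [mem_sphere_zero_iff_norm] at hy1
      refine lt_of_le_of_lt (iInf_le _ (⟨y, hy1⟩ : Metric.sphere (0 : EuclideanSpace ℝ (Fin d)) 1)) ?_
      have hterm : ∀ i, f (‖y - v i‖^2) = (((f (‖y - v i‖^2)).toReal : ℝ) : EReal) := by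
        intro i
        have hyne : y ≠ v i := fun hcontra => hy2 ⟨i, hcontra.symm⟩
        have hpos : 0 < ‖y - v i‖ := by
          rw [norm_pos_iff, sub_ne_zero]
          exact hyne
        have hle : ‖y - v i‖ ≤ 2 := by
          calc ‖y - v i‖ ≤ ‖y‖ + ‖v i‖ := norm_sub_le y (v i)
            _ = 2 := by rw [hynorm, hvnorm i]; norm_num
        have hmem : ‖y - v i‖^2 ∈ Set.Ioc (0:ℝ) 4 := by
          constructor
          · positivity
          · have h3 : ‖y - v i‖^2 ≤ 2^2 := pow_le_pow_left₀ (norm_nonneg _) hle 2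
            norm_num at h3
            exact h3
        exact (EReal.coe_toReal (hfin _ hmem) (hne_bot _ ⟨le_of_lt hmem.1, hmem.2⟩)).symm
      calc (∑ i, f (‖y - v i‖^2))
          = ∑ i, (((f (‖y - v i‖^2)).toReal : ℝ) : EReal) := Finset.sum_congr rfl fun i _ => hterm i
        _ = ((∑ i, (f (‖y - v i‖^2)).toReal : ℝ) : EReal) := (ereal_coe_sum _ _).symm
        _ < ⊤ := EReal.coe_lt_top _
  · -- main case
    have h0mem : (0 : EuclideanSpace ℝ (Fin d)) ∈ convexHull ℝ (Set.range v) :=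
      interior_subset hint
    rw [convexHull_range_eq_exists_affineCombination] at h0mem
    obtain ⟨s, w, hw0, hw1, hwc⟩ := h0mem
    set lam : Fin (d+1) → ℝ := fun i => if i ∈ s then w i else 0 with hlam_def
    have hlam0 : ∀ i, 0 ≤ lam i := by
      intro i
      by_cases hi : i ∈ s <;> simp [hlam_def, hi]
      exact hw0 i hi
    have hlamsum : ∑ i, lam i = 1 := by
      rw [hlam_def]
      rw [Finset.sum_ite_mem, Finset.univ_inter]
      exact hw1
    have hlamv : ∑ i, lam i • v i = 0 := by
      have hlin := Finset.affineCombination_eq_linear_combination s v w hw1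
      rw [hwc] at hlin
      have : ∑ i, lam i • v i = ∑ i ∈ s, w i • v i := by
        rw [← Finset.univ_inter s, ← Finset.sum_ite_mem]
        apply Finset.sum_congr rfl
        intro i _
        by_cases hi : i ∈ s <;> simp [hlam_def, hi]
      rw [this, ← hlin]
    obtain ⟨k0, -, hk0max⟩ := Finset.exists_max_image Finset.univ lam Finset.univ_nonempty
    have hd1 : (0:ℝ) < (d:ℝ)+1 := by linarith
    have hk0 : 1/((d:ℝ)+1) ≤ lam k0 := by
      by_contra hcon
      push_neg at hcon
      have hsumle : ∑ i, lam i ≤ (d+1) • lam k0 :=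
        Finset.sum_le_card_nsmul Finset.univ lam (lam k0)
          (fun i _ => hk0max i (Finset.mem_univ i)) |>.trans_eq (by
            rw [Finset.card_univ, Fintype.card_fin])
      rw [nsmul_eq_mul] at hsumle
      have : ((d:ℝ)+1) * lam k0 < ((d:ℝ)+1) * (1/((d:ℝ)+1)) :=
        mul_lt_mul_of_pos_left hcon hd1
      rw [mul_one_div, div_self (ne_of_gt hd1)] at this
      rw [hlamsum] at hsumle
      push_cast at hsumle
      linarith
    have hmain := per_k d hd f hne_bot hfin hanti hconv hlim v hvnorm lam hlam0 hlamsum hlamv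
      k0 hk0 hf0top
    refine ⟨hmain.1, ?_⟩
    intro hsc hirr
    rcases hmain.2 hsc with ⟨hreg0, hlamk0⟩ | hstrict
    · have halleq : ∀ i, lam i ≤ 1/((d:ℝ)+1) := by
        intro i
        rw [← hlamk0]
        exact hk0max i (Finset.mem_univ i)
      push_neg at hirr
      obtain ⟨p, q, hpq, hpqne⟩ := hirr
      have hkp : 1/((d:ℝ)+1) ≤ lam p := by
        by_contra hcon
        push_neg at hcon
        have hsumlt : ∑ i, lam i < ∑ _i : Fin (d+1), (1/((d:ℝ)+1)) :=
          Finset.sum_lt_sum (fun j _ => halleq j) ⟨p, Finset.mem_univ p, hcon⟩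
        rw [Finset.sum_const, Finset.card_univ, Fintype.card_fin, nsmul_eq_mul,
          mul_one_div] at hsumlt
        push_cast at hsumlt
        rw [div_self (ne_of_gt hd1)] at hsumlt
        linarith [hlamsum]
      have hp := per_k d hd f hne_bot hfin hanti hconv hlim v hvnorm lam hlam0 hlamsum hlamv
        p hkp hf0top
      rcases hp.2 hsc with ⟨hregp, -⟩ | hstrictp
      · exact absurd (hregp q (Ne.symm hpq)) hpqne
      · exact hstrictp
    · exact hstrict
end

section
/- Let d ≥ 2 and σ > 0, and let ω* = {x_0,...,x_d} be the vertices of a regular d-simplex inscribed in S^{d-1}. Then for every x ∈ S^{d-1}, ∑_{i=0}^d exp(-σ|x - x_i|²) ≥ exp(-4σ) + d·exp(-σ(2 - 2/d)), with equality if and only if x ∈ {-x_0,...,-x_d}. -/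
noncomputable def qC (s a : ℝ) : ℝ :=
  (Real.exp (-s) - Real.exp (s*a) + s * Real.exp (s*a) * (1+a)) / (1+a)^2

noncomputable def gg (s a t : ℝ) : ℝ :=
  Real.exp (s*t) - Real.exp (s*a) - s * Real.exp (s*a) * (t - a) - qC s a * (t-a)^2

lemma gg_neg_one {s a : ℝ} (ha : -1 < a) : gg s a (-1) = 0 := by
  have h : (1:ℝ) + a ≠ 0 := by linarith
  unfold gg qC
  field_simp
  ring

lemma gg_a (s a : ℝ) : gg s a a = 0 := by simp [gg]

lemma hasDerivAt_gg (s a t : ℝ) :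
    HasDerivAt (gg s a) (s * Real.exp (s*t) - s * Real.exp (s*a) - 2 * qC s a * (t-a)) t := by
  have h1 : HasDerivAt (fun t => Real.exp (s*t)) (Real.exp (s*t) * s) t :=
    by simpa using ((hasDerivAt_id t).const_mul s).exp
  have h2 : HasDerivAt (fun t : ℝ => s * Real.exp (s*a) * (t - a)) (s * Real.exp (s*a)) t := by
    simpa using ((hasDerivAt_id t).sub_const a).const_mul (s * Real.exp (s*a))
  have h3 : HasDerivAt (fun t : ℝ => qC s a * (t-a)^2) (qC s a * (2*(t-a))) t := by
    have := (((hasDerivAt_id t).sub_const a).pow 2).const_mul (qC s a)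
    simpa using this
  have := ((h1.sub_const (Real.exp (s*a))).sub h2).sub h3
  exact this.congr_deriv (by ring)

lemma deriv_gg (s a : ℝ) :
    deriv (gg s a) = fun t => s * Real.exp (s*t) - s * Real.exp (s*a) - 2 * qC s a * (t-a) := by
  funext t; exact (hasDerivAt_gg s a t).deriv

noncomputable def gg' (s a t : ℝ) : ℝ := s * Real.exp (s*t) - s * Real.exp (s*a) - 2 * qC s a * (t-a)

lemma hasDerivAt_gg' (s a t : ℝ) :
    HasDerivAt (gg' s a) (s^2 * Real.exp (s*t) - 2 * qC s a) t := by
  have h1 : HasDerivAt (fun t => Real.exp (s*t)) (Real.exp (s*t) * s) t :=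
    by simpa using ((hasDerivAt_id t).const_mul s).exp
  have h2 : HasDerivAt (fun t : ℝ => 2 * qC s a * (t - a)) (2 * qC s a) t := by
    simpa using ((hasDerivAt_id t).sub_const a).const_mul (2 * qC s a)
  have := ((h1.const_mul s).sub_const (s * Real.exp (s*a))).sub h2
  exact this.congr_deriv (by ring)

lemma deriv_gg' (s a : ℝ) :
    deriv (gg' s a) = fun t => s^2 * Real.exp (s*t) - 2 * qC s a := by
  funext t; exact (hasDerivAt_gg' s a t).deriv

lemma cont_gg (s a : ℝ) : Continuous (gg s a) := by
  unfold gg; continuity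

lemma cont_gg' (s a : ℝ) : Continuous (gg' s a) := by
  unfold gg'; continuity

open Set in
lemma gg_main (s a : ℝ) (hs : 0 < s) (ha : -1 < a) (t : ℝ) (ht : -1 ≤ t) :
    0 ≤ gg s a t ∧ (gg s a t = 0 ↔ t = -1 ∨ t = a) := by
  -- Rolle for gg on [-1, a]
  obtain ⟨c, hc, hgc⟩ := exists_deriv_eq_zero ha ((cont_gg s a).continuousOn)
    ((gg_neg_one ha).trans (gg_a s a).symm)
  have hc0 : gg' s a c = 0 := by rw [deriv_gg] at hgc; exact hgc
  have hca : gg' s a a = 0 := by simp [gg']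
  -- Rolle for gg' on [c, a]
  obtain ⟨m, hm, hgm⟩ := exists_deriv_eq_zero hc.2 ((cont_gg' s a).continuousOn)
    (hc0.trans hca.symm)
  have hm0 : s^2 * Real.exp (s*m) - 2 * qC s a = 0 := by rw [deriv_gg'] at hgm; exact hgm
  have hD : ∀ u : ℝ, deriv (gg' s a) u = s^2 * (Real.exp (s*u) - Real.exp (s*m)) := by
    intro u; simp only [deriv_gg']; nlinarith [hm0]
  have hs2 : 0 < s^2 := by positivity
  -- gg' strict anti on Iic m, strict mono on Ici m
  have A1 : StrictAntiOn (gg' s a) (Iic m) := by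
    apply strictAntiOn_of_deriv_neg (convex_Iic m) (cont_gg' s a).continuousOn
    intro u hu
    rw [interior_Iic] at hu
    rw [hD u]
    have : Real.exp (s*u) < Real.exp (s*m) := Real.exp_lt_exp.2 (by nlinarith [hu.out])
    nlinarith
  have A2 : StrictMonoOn (gg' s a) (Ici m) := by
    apply strictMonoOn_of_deriv_pos (convex_Ici m) (cont_gg' s a).continuousOn
    intro u hu
    rw [interior_Ici] at hu
    rw [hD u]
    have : Real.exp (s*m) < Real.exp (s*u) := Real.exp_lt_exp.2 (by nlinarith [hu.out])
    nlinarith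
  -- signs of gg'
  have hφ1 : ∀ u, u < c → 0 < gg' s a u := by
    intro u hu
    have := A1 (le_of_lt (hu.trans hm.1) : u ∈ Iic m) (le_of_lt hm.1 : c ∈ Iic m) hu
    linarith [hc0 ▸ this]
  have hφ2 : ∀ u, c < u → u < a → gg' s a u < 0 := by
    intro u hu1 hu2
    rcases le_or_gt u m with h | h
    · have := A1 (le_of_lt hm.1 : c ∈ Iic m) (h : u ∈ Iic m) hu1
      linarith [hc0 ▸ this]
    · have := A2 (le_of_lt h : u ∈ Ici m) (le_of_lt hm.2 : a ∈ Ici m) hu2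
      linarith [hca ▸ this]
  have hφ3 : ∀ u, a < u → 0 < gg' s a u := by
    intro u hu
    have := A2 (le_of_lt hm.2 : a ∈ Ici m) (le_of_lt (hm.2.trans hu) : u ∈ Ici m) hu
    linarith [hca ▸ this]
  -- monotonicity of gg
  have M1 : StrictMonoOn (gg s a) (Icc (-1) c) := by
    apply strictMonoOn_of_deriv_pos (convex_Icc _ _) (cont_gg s a).continuousOn
    intro u hu
    rw [interior_Icc] at hu
    rw [deriv_gg]
    exact hφ1 u hu.2
  have M2 : StrictAntiOn (gg s a) (Icc c a) := by
    apply strictAntiOn_of_deriv_neg (convex_Icc _ _) (cont_gg s a).continuousOn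
    intro u hu
    rw [interior_Icc] at hu
    rw [deriv_gg]
    exact hφ2 u hu.1 hu.2
  have M3 : StrictMonoOn (gg s a) (Ici a) := by
    apply strictMonoOn_of_deriv_pos (convex_Ici _) (cont_gg s a).continuousOn
    intro u hu
    rw [interior_Ici] at hu
    rw [deriv_gg]
    exact hφ3 u hu
  -- positivity
  have hpos : ∀ u, -1 < u → u ≠ a → 0 < gg s a u := by
    intro u hu hne
    rcases le_or_gt u c with h | h
    · have := M1 ⟨le_refl _, le_of_lt hc.1⟩ ⟨le_of_lt hu, h⟩ hu
      rw [gg_neg_one ha] at this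
      exact this
    · rcases lt_trichotomy u a with h2 | h2 | h2
      · have := M2 ⟨le_of_lt h, le_of_lt h2⟩ ⟨le_of_lt hc.2, le_refl _⟩ h2
        rw [gg_a] at this
        exact this
      · exact absurd h2 hne
      · have := M3 (le_refl a : a ∈ Ici a) (le_of_lt h2) h2
        rw [gg_a] at this
        exact this
  constructor
  · rcases eq_or_lt_of_le ht with h | h
    · rw [← h, gg_neg_one ha]
    · rcases eq_or_ne t a with h2 | h2
      · rw [h2, gg_a]
      · exact le_of_lt (hpos t h h2)
  · constructor
    · intro h0
      by_contra hcon
      push_neg at hcon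
      have h1 : -1 < t := lt_of_le_of_ne ht (Ne.symm hcon.1)
      exact absurd h0 (ne_of_gt (hpos t h1 hcon.2))
    · rintro (h | h)
      · rw [h, gg_neg_one ha]
      · rw [h, gg_a]

lemma sum_lemma (d : ℕ) (hd : 2 ≤ d) (s : ℝ) (hs : 0 < s) (u : Fin (d+1) → ℝ)
    (hub : ∀ i, -1 ≤ u i) (hsum : ∑ i, u i = 0) (hsq : ∑ i, (u i)^2 = ((d:ℝ)+1)/d) :
    Real.exp (-s) + d * Real.exp (s * (1/d)) ≤ ∑ i, Real.exp (s * u i) ∧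
    (∑ i, Real.exp (s * u i) = Real.exp (-s) + d * Real.exp (s * (1/d)) ↔ ∃ k, u k = -1) := by
  have hd0 : (0:ℝ) < d := by positivity
  set a : ℝ := 1/d with ha_def
  have ha : -1 < a := by
    have : 0 < a := by positivity
    linarith
  have hE := Real.exp_pos (s*a)
  -- pointwise expansion of gg
  have hexpand : ∀ t : ℝ, gg s a t = Real.exp (s*t) +
      ((- Real.exp (s*a) + s*Real.exp (s*a)*a - qC s a*a^2)
        + (-(s*Real.exp (s*a)) + 2*qC s a*a) * t + (-(qC s a)) * t^2) := by
    intro t; simp only [gg]; ring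
  have hsumgg : ∑ i, gg s a (u i) =
      ∑ i, Real.exp (s * u i) - (Real.exp (-s) + d * Real.exp (s*a)) := by
    have h0 := gg_neg_one (s := s) ha
    simp only [gg] at h0
    calc ∑ i, gg s a (u i)
        = ∑ i, Real.exp (s * u i)
          + (((d:ℝ)+1) * ((- Real.exp (s*a) + s*Real.exp (s*a)*a - qC s a*a^2))
            + (-(s*Real.exp (s*a)) + 2*qC s a*a) * (∑ i, u i)
            + (-(qC s a)) * (∑ i, (u i)^2)) := by
          simp only [hexpand]
          rw [Finset.sum_add_distrib, Finset.sum_add_distrib, Finset.sum_add_distrib,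
            Finset.sum_const, ← Finset.mul_sum, ← Finset.mul_sum]
          simp [Finset.card_univ]
          try ring
      _ = ∑ i, Real.exp (s * u i) - (Real.exp (-s) + d * Real.exp (s*a)) := by
          rw [hsum, hsq]
          have hane : (d:ℝ) ≠ 0 := ne_of_gt hd0
          have hda : (d:ℝ) * a = 1 := by rw [ha_def]; field_simp
          have hq : ((d:ℝ)+1)/d = (d+1)*a := by rw [ha_def]; ring
          rw [hq]
          simp only [mul_neg_one] at h0
          linear_combination h0 + (s * Real.exp (s*a) - qC s a * (1+a)) * hda
  have heach : ∀ i : Fin (d+1), 0 ≤ gg s a (u i) ∧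
      (gg s a (u i) = 0 ↔ u i = -1 ∨ u i = a) :=
    fun i => gg_main s a hs ha (u i) (hub i)
  have hnonneg : 0 ≤ ∑ i, gg s a (u i) := Finset.sum_nonneg fun i _ => (heach i).1
  constructor
  · linarith [hsumgg]
  constructor
  · intro heq
    have hzero : ∑ i, gg s a (u i) = 0 := by rw [hsumgg, heq]; ring
    have hall : ∀ i ∈ Finset.univ, gg s a (u i) = 0 :=
      (Finset.sum_eq_zero_iff_of_nonneg (fun i _ => (heach i).1)).1 hzero
    by_contra hcon
    push_neg at hcon
    have hallA : ∀ i, u i = a := by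
      intro i
      rcases (heach i).2.1 (hall i (Finset.mem_univ i)) with h | h
      · exact absurd h (hcon i)
      · exact h
    have : ∑ i, u i = ((d:ℝ)+1) * a := by
      simp [hallA, Finset.card_univ, mul_comm]
    rw [hsum] at this
    have : (0:ℝ) < ((d:ℝ)+1) * a := by positivity
    linarith
  · rintro ⟨k, hk⟩
    -- all other coordinates equal a
    have hrest : ∀ j, j ≠ k → u j = a := by
      have hs1 : ∑ j ∈ Finset.univ.erase k, u j = 1 := by
        have := Finset.sum_erase_add Finset.univ u (Finset.mem_univ k)
        rw [hsum, hk] at this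
        linarith
      have hs2 : ∑ j ∈ Finset.univ.erase k, (u j)^2 = 1/d := by
        have h2 := Finset.sum_erase_add Finset.univ (fun j => (u j)^2) (Finset.mem_univ k)
        rw [hsq, hk] at h2
        have hane : (d:ℝ) ≠ 0 := ne_of_gt hd0
        field_simp at h2 ⊢
        linarith
      have hcard : (Finset.univ.erase k).card = d := by
        rw [Finset.card_erase_of_mem (Finset.mem_univ k), Finset.card_univ]
        simp
      have hzero : ∑ j ∈ Finset.univ.erase k, (u j - a)^2 = 0 := by
        have expand : ∀ j : Fin (d+1), (u j - a)^2 = (u j)^2 - 2*a*(u j) + a^2 := fun j => by ring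
        rw [Finset.sum_congr rfl (fun j _ => expand j), Finset.sum_add_distrib,
          Finset.sum_sub_distrib, ← Finset.mul_sum, Finset.sum_const, hs1, hs2, hcard]
        have hane : (d:ℝ) ≠ 0 := ne_of_gt hd0
        simp only [nsmul_eq_mul, ha_def]
        field_simp
        ring
      intro j hj
      have hmem : j ∈ Finset.univ.erase k := Finset.mem_erase.2 ⟨hj, Finset.mem_univ j⟩
      have := (Finset.sum_eq_zero_iff_of_nonneg (fun i _ => sq_nonneg (u i - a))).1 hzero j hmem
      have := sq_eq_zero_iff.1 this
      linarith
    -- compute the sum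
    have : ∑ i, Real.exp (s * u i) = Real.exp (s * u k) + ∑ j ∈ Finset.univ.erase k, Real.exp (s * u j) := by
      rw [← Finset.sum_erase_add Finset.univ _ (Finset.mem_univ k)]
      ring
    rw [this, hk]
    have : ∑ j ∈ Finset.univ.erase k, Real.exp (s * u j) = d * Real.exp (s * a) := by
      rw [Finset.sum_congr rfl (fun j hj => by rw [hrest j (Finset.mem_erase.1 hj).1])]
      rw [Finset.sum_const]
      rw [Finset.card_erase_of_mem (Finset.mem_univ k), Finset.card_univ]
      simp [nsmul_eq_mul]
    rw [this]
    norm_num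

lemma simplex_sum_zero {d : ℕ} (hd : 2 ≤ d) (x : Fin (d+1) → EuclideanSpace ℝ (Fin d))
    (hnorm : ∀ i, ‖x i‖ = 1)
    (hinner : ∀ i j, i ≠ j → (inner ℝ (x i) (x j) : ℝ) = -1/(d:ℝ)) :
    ∑ i, x i = 0 := by
  have hd0 : (0:ℝ) < d := by
    have : 0 < d := by omega
    exact_mod_cast this
  have key : (inner ℝ (∑ i, x i) (∑ i, x i) : ℝ) = 0 := by
    rw [sum_inner]
    apply Finset.sum_eq_zero
    intro i _
    rw [inner_sum]
    rw [← Finset.sum_erase_add _ _ (Finset.mem_univ i)]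
    have h1 : ∀ j ∈ Finset.univ.erase i, (inner ℝ (x i) (x j) : ℝ) = -1/(d:ℝ) :=
      fun j hj => hinner i j (Ne.symm (Finset.mem_erase.1 hj).1)
    rw [Finset.sum_congr rfl h1, Finset.sum_const,
      Finset.card_erase_of_mem (Finset.mem_univ i), Finset.card_univ]
    have h2 : (inner ℝ (x i) (x i) : ℝ) = 1 := by
      rw [real_inner_self_eq_norm_sq, hnorm i]; norm_num
    rw [h2]
    simp only [Fintype.card_fin, Nat.add_sub_cancel, nsmul_eq_mul]
    field_simp
    norm_num
  exact inner_self_eq_zero.1 key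

lemma simplex_frame {d : ℕ} (hd : 2 ≤ d) (x : Fin (d+1) → EuclideanSpace ℝ (Fin d))
    (hnorm : ∀ i, ‖x i‖ = 1)
    (hinner : ∀ i j, i ≠ j → (inner ℝ (x i) (x j) : ℝ) = -1/(d:ℝ))
    (y : EuclideanSpace ℝ (Fin d)) :
    ∑ i, (inner ℝ (x i) y : ℝ) • x i = (((d:ℝ)+1)/d) • y := by
  have hd0 : (0:ℝ) < d := by
    have : 0 < d := by omega
    exact_mod_cast this
  have hane : (d:ℝ) ≠ 0 := ne_of_gt hd0
  have hsum0 := simplex_sum_zero hd x hnorm hinner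
  have hself : ∀ i, (inner ℝ (x i) (x i) : ℝ) = 1 := by
    intro i; rw [real_inner_self_eq_norm_sq, hnorm i]; norm_num
  -- the basic identity on the simplex vectors themselves
  have hbasic : ∀ j, ∑ i, (inner ℝ (x i) (x j) : ℝ) • x i = (((d:ℝ)+1)/d) • x j := by
    intro j
    rw [← Finset.sum_erase_add _ _ (Finset.mem_univ j)]
    have h1 : ∑ i ∈ Finset.univ.erase j, (inner ℝ (x i) (x j) : ℝ) • x i
        = (-1/(d:ℝ)) • ∑ i ∈ Finset.univ.erase j, x i := by
      rw [Finset.smul_sum]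
      exact Finset.sum_congr rfl fun i hi => by rw [hinner i j (Finset.mem_erase.1 hi).1]
    have h2 : ∑ i ∈ Finset.univ.erase j, x i = - x j := by
      have h3 := Finset.sum_erase_add Finset.univ x (Finset.mem_univ j)
      rw [hsum0] at h3
      exact eq_neg_of_add_eq_zero_left h3
    rw [h1, h2, hself j, one_smul, smul_neg, ← neg_smul]
    have hco : (((d:ℝ)+1)/d) = -(-1/(d:ℝ)) + 1 := by field_simp; ring
    rw [hco, add_smul, one_smul]
  -- linear independence of d of the vectors
  set v : Fin d → EuclideanSpace ℝ (Fin d) := fun i => x i.succ with hv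
  have hli : LinearIndependent ℝ v := by
    rw [Fintype.linearIndependent_iff]
    intro g hg
    set S := ∑ i, g i with hS
    have hgj : ∀ j, g j = S / ((d:ℝ)+1) := by
      intro j
      have h0 : (inner ℝ (v j) (∑ i, g i • v i) : ℝ) = 0 := by rw [hg, inner_zero_right]
      rw [inner_sum] at h0
      simp_rw [real_inner_smul_right] at h0
      rw [← Finset.sum_erase_add _ _ (Finset.mem_univ j)] at h0
      have h1 : ∑ i ∈ Finset.univ.erase j, g i * (inner ℝ (v j) (v i) : ℝ)
          = (-1/(d:ℝ)) * ∑ i ∈ Finset.univ.erase j, g i := by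
        rw [Finset.mul_sum]
        refine Finset.sum_congr rfl fun i hi => ?_
        rw [hinner j.succ i.succ (fun h => (Finset.mem_erase.1 hi).1 (Fin.succ_injective d h).symm)]
        ring
      have h2 : ∑ i ∈ Finset.univ.erase j, g i = S - g j := by
        have := Finset.sum_erase_add Finset.univ g (Finset.mem_univ j)
        rw [← hS] at this
        linarith
      rw [h1, h2, hself j.succ] at h0
      field_simp at h0 ⊢
      linarith
    have hSz : S = 0 := by
      have h4 : S = ∑ j : Fin d, S / ((d:ℝ)+1) := by
        conv_lhs => rw [hS]
        exact Finset.sum_congr rfl fun j _ => hgj j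
      rw [Finset.sum_const, Finset.card_univ, Fintype.card_fin, nsmul_eq_mul] at h4
      have : S * ((d:ℝ)+1) = (d:ℝ) * S := by
        field_simp at h4
        linarith
      nlinarith
    intro i
    rw [hgj i, hSz, zero_div]
  -- span is everything
  have hspan : Submodule.span ℝ (Set.range v) = ⊤ := by
    apply Submodule.eq_top_of_finrank_eq
    rw [finrank_span_eq_card hli, finrank_euclideanSpace_fin, Fintype.card_fin]
  -- extend hbasic to all y by span induction
  have hy : y ∈ Submodule.span ℝ (Set.range v) := by rw [hspan]; exact Submodule.mem_top
  induction hy using Submodule.span_induction with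
  | mem z hz =>
    obtain ⟨j, rfl⟩ := hz
    exact hbasic j.succ
  | zero => simp
  | add z w _ _ hz hw =>
    simp_rw [inner_add_right, add_smul, Finset.sum_add_distrib, hz, hw, smul_add]
  | smul c z _ hz =>
    simp_rw [real_inner_smul_right, mul_smul]
    rw [← Finset.smul_sum, hz, smul_comm]

theorem stmt_19 (d : ℕ) (hd : 2 ≤ d) (σ : ℝ) (hσ : 0 < σ)
    (x : Fin (d+1) → EuclideanSpace ℝ (Fin d))
    (hnorm : ∀ i, ‖x i‖ = 1)
    (hinner : ∀ i j, i ≠ j → (inner ℝ (x i) (x j) : ℝ) = -1/(d:ℝ))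
    (y : EuclideanSpace ℝ (Fin d)) (hy : ‖y‖ = 1) :
    Real.exp (-(σ * 4)) + (d:ℝ) * Real.exp (-(σ * (2 - 2/(d:ℝ)))) ≤
      ∑ i, Real.exp (-(σ * ‖y - x i‖^2)) ∧
    (∑ i, Real.exp (-(σ * ‖y - x i‖^2)) =
        Real.exp (-(σ * 4)) + (d:ℝ) * Real.exp (-(σ * (2 - 2/(d:ℝ)))) ↔
      ∃ k, y = -(x k)) := by
  have hd0 : (0:ℝ) < d := by
    have : 0 < d := by omega
    exact_mod_cast this
  set u : Fin (d+1) → ℝ := fun i => (inner ℝ (x i) y : ℝ) with hu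
  have hsum0 := simplex_sum_zero hd x hnorm hinner
  have hframe := simplex_frame hd x hnorm hinner y
  have hub : ∀ i, -1 ≤ u i := by
    intro i
    have h1 : |(inner ℝ (x i) y : ℝ)| ≤ ‖x i‖ * ‖y‖ := abs_real_inner_le_norm _ _
    rw [hnorm i, hy] at h1
    have := abs_le.1 h1
    simpa [hu] using this.1
  have hsumu : ∑ i, u i = 0 := by
    have : ∑ i, (inner ℝ (x i) y : ℝ) = (inner ℝ (∑ i, x i) y : ℝ) := (sum_inner _ _ _).symm
    rw [hsum0] at this
    simpa [hu] using this.trans (inner_zero_left y)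
  have hsqu : ∑ i, (u i)^2 = ((d:ℝ)+1)/d := by
    have h1 : (inner ℝ (∑ i, (inner ℝ (x i) y : ℝ) • x i) y : ℝ) = ∑ i, (u i)^2 := by
      rw [sum_inner]
      refine Finset.sum_congr rfl fun i _ => ?_
      rw [real_inner_smul_left]
      simp [hu, sq]
    rw [hframe, real_inner_smul_left, real_inner_self_eq_norm_sq, hy] at h1
    rw [← h1]
    ring
  obtain ⟨hineq, hiff⟩ := sum_lemma d hd (2*σ) (by linarith) u hub hsumu hsqu
  have hterm : ∀ i, Real.exp (-(σ * ‖y - x i‖^2)) = Real.exp (-(2*σ)) * Real.exp ((2*σ) * u i) := by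
    intro i
    rw [← Real.exp_add]
    congr 1
    have hnn : ‖y - x i‖^2 = 2 - 2 * u i := by
      rw [norm_sub_sq_real, hy, hnorm i, real_inner_comm]
      simp [hu]
      ring_nf
    rw [hnn]
    ring
  have hsum_eq : ∑ i, Real.exp (-(σ * ‖y - x i‖^2)) = Real.exp (-(2*σ)) * ∑ i, Real.exp ((2*σ) * u i) := by
    rw [Finset.mul_sum]
    exact Finset.sum_congr rfl fun i _ => hterm i
  have hRHS : Real.exp (-(σ*4)) + (d:ℝ) * Real.exp (-(σ*(2-2/(d:ℝ))))
      = Real.exp (-(2*σ)) * (Real.exp (-(2*σ)) + (d:ℝ) * Real.exp ((2*σ) * (1/(d:ℝ)))) := by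
    rw [mul_add, ← Real.exp_add, mul_left_comm, ← Real.exp_add]
    congr 2 <;> ring
  have hexpne : Real.exp (-(2*σ)) ≠ 0 := ne_of_gt (Real.exp_pos _)
  constructor
  · rw [hsum_eq, hRHS]
    exact mul_le_mul_of_nonneg_left hineq (le_of_lt (Real.exp_pos _))
  · rw [hsum_eq, hRHS, mul_right_inj' hexpne, hiff]
    constructor
    · rintro ⟨k, hk⟩
      refine ⟨k, ?_⟩
      have hzero : ‖y + x k‖^2 = 0 := by
        rw [norm_add_sq_real, hy, hnorm k, real_inner_comm]
        have : (inner ℝ (x k) y : ℝ) = -1 := hk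
        rw [this]
        ring
      have : ‖y + x k‖ = 0 := by
        have := sq_eq_zero_iff.1 hzero
        exact this
      have : y + x k = 0 := norm_eq_zero.1 this
      exact eq_neg_of_add_eq_zero_left this
    · rintro ⟨k, hk⟩
      refine ⟨k, ?_⟩
      have : u k = (inner ℝ (x k) (-(x k)) : ℝ) := by rw [hu, hk]
      rw [inner_neg_right, real_inner_self_eq_norm_sq, hnorm k] at this
      rw [this]
      norm_num
end
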